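/- arXiv:2006.09139 — 8 statements merged into one kernel-verified Lean document; each statement's English description precedes it below -/
import Mathlib

section
/- Let G be a finite group and H a subgroup of G. If H is s-permutable in G, then H is subnormal in G. -/
open Pointwise

/-- A subgroup `H` of `G` is s-permutable (s-quasinormal) in `G` if `H` permutes with
every Sylow subgroup of `G`. -/
def IsSPermutable {G : Type*} [Group G] (H : Subgroup G) : Prop :=
  ∀ q : ℕ, q.Prime → ∀ Q : Sylow q G,
    (H : Set G) * ((Q : Subgroup G) : Set G) = ((Q : Subgroup G) : Set G) * (H : Set G)

/-- `H` is subnormal in `G`: there is a chain `H = H_0 ⊴ H_1 ⊴ ... ⊴ H_n = G`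
with each term normal in the next. -/
def IsSubnormal {G : Type*} [Group G] (H : Subgroup G) : Prop :=
  ∃ (n : ℕ) (c : Fin (n + 1) → Subgroup G),
    c 0 = H ∧ c (Fin.last n) = ⊤ ∧
    ∀ i : Fin n, c i.castSucc ≤ c i.succ ∧
      ((c i.castSucc).subgroupOf (c i.succ)).Normal


namespace KegelAux

variable {G : Type*} [Group G]

/-- Relative subnormality, as an inductive predicate. -/
inductive SN (H : Subgroup G) : Subgroup G → Prop
  | refl : SN H H
  | step {K L : Subgroup G} : SN H K → K ≤ L → (K.subgroupOf L).Normal → SN H L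

theorem SN.le {H K : Subgroup G} (h : SN H K) : H ≤ K := by
  induction h with
  | refl => exact le_rfl
  | step _ hKL _ ih => exact ih.trans hKL

theorem SN.trans {H K L : Subgroup G} (h1 : SN H K) (h2 : SN K L) : SN H L := by
  induction h2 with
  | refl => exact h1
  | step _ hKL hn ih => exact ih.step hKL hn

theorem SN.prepend {H K T : Subgroup G} (hHK : H ≤ K) (hn : (H.subgroupOf K).Normal)
    (h : SN K T) : SN H T := by
  induction h with
  | refl => exact (SN.refl).step hHK hn
  | step _ hKL hn' ih => exact ih.step hKL hn'

theorem map_subgroupOf_normal {G' : Type*} [Group G'] (f : G →* G') {K L : Subgroup G}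
    (hKL : K ≤ L) (h : (K.subgroupOf L).Normal) :
    ((K.map f).subgroupOf (L.map f)).Normal := by
  constructor
  rintro ⟨x, hxL⟩ hx ⟨g, hgL⟩
  simp only [Subgroup.mem_subgroupOf] at hx ⊢
  obtain ⟨a, haK, hfa⟩ := hx
  obtain ⟨b, hbL, hfb⟩ := hgL
  have key : b * a * b⁻¹ ∈ K := by
    have := h.conj_mem ⟨a, hKL haK⟩ (by simpa [Subgroup.mem_subgroupOf] using haK) ⟨b, hbL⟩
    simpa [Subgroup.mem_subgroupOf] using this
  refine ⟨b * a * b⁻¹, key, ?_⟩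
  simp [map_mul, map_inv, hfa, hfb]

theorem comap_subgroupOf_normal {G' : Type*} [Group G'] (f : G' →* G) {K L : Subgroup G}
    (h : (K.subgroupOf L).Normal) :
    ((K.comap f).subgroupOf (L.comap f)).Normal := by
  constructor
  rintro ⟨x, hxL⟩ hx ⟨g, hgL⟩
  simp only [Subgroup.mem_subgroupOf, Subgroup.mem_comap] at hx hxL hgL ⊢
  have := h.conj_mem ⟨f x, hxL⟩ (by simpa [Subgroup.mem_subgroupOf] using hx) ⟨f g, hgL⟩
  simpa [Subgroup.mem_subgroupOf, map_mul, map_inv] using this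

theorem SN.map {G' : Type*} [Group G'] (f : G →* G') {H K : Subgroup G} (h : SN H K) :
    SN (H.map f) (K.map f) := by
  induction h with
  | refl => exact SN.refl
  | step _ hKL hn ih => exact ih.step (Subgroup.map_mono hKL) (map_subgroupOf_normal f hKL hn)

theorem SN.comap {G' : Type*} [Group G'] (f : G' →* G) {H K : Subgroup G} (h : SN H K) :
    SN (H.comap f) (K.comap f) := by
  induction h with
  | refl => exact SN.refl
  | step _ hKL hn ih => exact ih.step (Subgroup.comap_mono hKL) (comap_subgroupOf_normal f hn)

theorem SN.exists_chain {H K : Subgroup G} (h : SN H K) :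
    ∃ (n : ℕ) (c : ℕ → Subgroup G), c 0 = H ∧ c n = K ∧
      ∀ i < n, c i ≤ c (i + 1) ∧ ((c i).subgroupOf (c (i + 1))).Normal := by
  induction h with
  | refl => exact ⟨0, fun _ => H, rfl, rfl, by omega⟩
  | @step K L _ hKL hn ih =>
    obtain ⟨n, c, h0, hn', hc⟩ := ih
    refine ⟨n + 1, fun i => if i ≤ n then c i else L, by simp [h0], by simp, ?_⟩
    intro i hi
    show (if i ≤ n then c i else L) ≤ (if i + 1 ≤ n then c (i + 1) else L) ∧
      ((if i ≤ n then c i else L).subgroupOf (if i + 1 ≤ n then c (i + 1) else L)).Normal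
    rcases Nat.lt_or_ge i n with h' | h'
    · have e1 : (if i ≤ n then c i else L) = c i := if_pos h'.le
      have e2 : (if i + 1 ≤ n then c (i + 1) else L) = c (i + 1) := if_pos h'
      obtain ⟨ha, hb⟩ := hc i h'
      constructor
      · rw [e1, e2]; exact ha
      · exact e1.symm ▸ e2.symm ▸ hb
    · have hin : i = n := by omega
      subst hin
      have e1 : (if i ≤ i then c i else L) = K := by rw [if_pos (le_refl i)]; exact hn'
      have e2 : (if i + 1 ≤ i then c (i + 1) else L) = L := if_neg (by omega)
      constructor
      · rw [e1, e2]; exact hKL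
      · exact e1.symm ▸ e2.symm ▸ hn


theorem SN.isSubnormal {H : Subgroup G} (h : SN H ⊤) : IsSubnormal H := by
  obtain ⟨n, c, h0, hn, hc⟩ := h.exists_chain
  refine ⟨n, fun i => c i, by simpa using h0, by simpa using hn, ?_⟩
  intro i
  have := hc i.val i.isLt
  simpa [Fin.coe_castSucc, Fin.val_succ] using this

theorem SN.of_isSubnormal {H : Subgroup G} (h : IsSubnormal H) : SN H ⊤ := by
  obtain ⟨n, c, h0, hn, hc⟩ := h
  have key : ∀ j : Fin (n + 1), SN (c 0) (c j) := by
    intro j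
    induction j using Fin.induction with
    | zero => exact SN.refl
    | succ i ih => exact ih.step (hc i).1 (hc i).2
  rw [← h0, ← hn]
  exact key (Fin.last n)


/-- If `H` and `K` permute as sets, `↑H * ↑K` is a subgroup. -/
def mulSG (H K : Subgroup G) (hp : (H : Set G) * (K : Set G) = (K : Set G) * (H : Set G)) :
    Subgroup G where
  carrier := (H : Set G) * (K : Set G)
  one_mem' := ⟨1, one_mem _, 1, one_mem _, mul_one 1⟩
  mul_mem' := by
    rintro a b ⟨h1, hh1, k1, hk1, rfl⟩ ⟨h2, hh2, k2, hk2, rfl⟩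
    have : k1 * h2 ∈ (H : Set G) * (K : Set G) := by
      rw [hp]; exact ⟨k1, hk1, h2, hh2, rfl⟩
    obtain ⟨h3, hh3, k3, hk3, he⟩ := this
    have he' : h3 * k3 = k1 * h2 := he
    refine ⟨h1 * h3, mul_mem hh1 hh3, k3 * k2, mul_mem hk3 hk2, ?_⟩
    calc h1 * h3 * (k3 * k2) = h1 * (h3 * k3) * k2 := by group
    _ = h1 * (k1 * h2) * k2 := by rw [he']
    _ = h1 * k1 * (h2 * k2) := by group
  inv_mem' := by
    rintro a ⟨h, hh, k, hk, rfl⟩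
    have : k⁻¹ * h⁻¹ ∈ (K : Set G) * (H : Set G) := ⟨k⁻¹, inv_mem hk, h⁻¹, inv_mem hh, rfl⟩
    rw [← hp] at this
    simpa [mul_inv_rev] using this

theorem coe_mulSG {H K : Subgroup G} (hp) : (mulSG H K hp : Set G) = (H : Set G) * K := rfl

theorem le_mulSG_left {H K : Subgroup G} (hp) : H ≤ mulSG H K hp := by
  intro x hx; exact ⟨x, hx, 1, one_mem _, mul_one x⟩

theorem le_mulSG_right {H K : Subgroup G} (hp) : K ≤ mulSG H K hp := by
  intro x hx; exact ⟨1, one_mem _, x, hx, one_mul x⟩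

/-- Dedekind-type lemma: if `H ≤ K` and `H` permutes with `Q`, then `H` permutes
with `Q ⊓ K`. -/
theorem perm_inf {H K Q : Subgroup G} (hHK : H ≤ K)
    (hp : (H : Set G) * (Q : Set G) = (Q : Set G) * (H : Set G)) :
    (H : Set G) * ((Q ⊓ K : Subgroup G) : Set G)
      = ((Q ⊓ K : Subgroup G) : Set G) * (H : Set G) := by
  ext x
  constructor
  · rintro ⟨h, hh, u, hu, rfl⟩
    have h1 : h * u ∈ (Q : Set G) * (H : Set G) := by
      rw [← hp]; exact ⟨h, hh, u, hu.1, rfl⟩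
    obtain ⟨v, hv, h', hh', he⟩ := h1
    have he' : v * h' = h * u := he
    have hvK : v ∈ K := by
      have : v = (h * u) * h'⁻¹ := by rw [← he']; group
      rw [this]
      exact mul_mem (mul_mem (hHK hh) hu.2) (inv_mem (hHK hh'))
    exact ⟨v, ⟨hv, hvK⟩, h', hh', he'⟩
  · rintro ⟨u, hu, h, hh, rfl⟩
    have h1 : u * h ∈ (H : Set G) * (Q : Set G) := by
      rw [hp]; exact ⟨u, hu.1, h, hh, rfl⟩
    obtain ⟨h', hh', v, hv, he⟩ := h1
    have he' : h' * v = u * h := he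
    have hvK : v ∈ K := by
      have : v = h'⁻¹ * (u * h) := by rw [← he']; group
      rw [this]
      exact mul_mem (inv_mem (hHK hh')) (mul_mem hu.2 (hHK hh))
    exact ⟨h', hh', v, ⟨hv, hvK⟩, he'⟩

/-- s-permutability passes to intermediate subgroups. -/
theorem isSPermutable_subgroupOf {H K : Subgroup G} (h : IsSPermutable H) (hHK : H ≤ K) :
    IsSPermutable (H.subgroupOf K) := by
  intro q hq Q₀
  -- find a Sylow q-subgroup of G whose intersection with K corresponds to Q₀
  have hQ₀ : IsPGroup q ((Q₀ : Subgroup ↥K).map K.subtype) := Q₀.2.map _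
  obtain ⟨P, hP⟩ := hQ₀.exists_le_sylow
  have hPK : IsPGroup q (((P : Subgroup G) ⊓ K).subgroupOf K) :=
    (IsPGroup.to_inf_left P.2).comap_subtype
  have hle : (Q₀ : Subgroup ↥K) ≤ ((P : Subgroup G) ⊓ K).subgroupOf K := by
    intro x hx
    have hxP : (x : G) ∈ P := hP (Subgroup.mem_map.mpr ⟨x, hx, rfl⟩)
    exact Subgroup.mem_subgroupOf.mpr ⟨hxP, x.2⟩
  have hQeq : ((P : Subgroup G) ⊓ K).subgroupOf K = Q₀ := Q₀.3 hPK hle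
  have e1 : K.subtype '' ((H.subgroupOf K : Subgroup ↥K) : Set ↥K) = (H : Set G) := by
    rw [← Subgroup.coe_map, Subgroup.subgroupOf_map_subtype, inf_eq_left.mpr hHK]
  have e2 : K.subtype '' ((Q₀ : Subgroup ↥K) : Set ↥K)
      = (((P : Subgroup G) ⊓ K : Subgroup G) : Set G) := by
    rw [← hQeq, ← Subgroup.coe_map, Subgroup.subgroupOf_map_subtype,
      inf_eq_left.mpr (inf_le_right : (P : Subgroup G) ⊓ K ≤ K)]
  apply Set.image_injective.mpr (Subgroup.subtype_injective K)
  rw [Set.image_mul, Set.image_mul, e1, e2]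
  exact perm_inf hHK (h q hq P)

theorem isSPermutable_map_mk' [Finite G] {H : Subgroup G} (h : IsSPermutable H)
    (N : Subgroup G) [N.Normal] : IsSPermutable (H.map (QuotientGroup.mk' N)) := by
  intro q hq Q'
  haveI := Fact.mk hq
  obtain ⟨Q, hQ⟩ := Sylow.mapSurjective_surjective (QuotientGroup.mk'_surjective N) q Q'
  have hcoe : (Q' : Subgroup (G ⧸ N)) = (Q : Subgroup G).map (QuotientGroup.mk' N) := by
    rw [← hQ]; rfl
  rw [hcoe]
  simp only [Subgroup.coe_map]
  rw [← Set.image_mul, ← Set.image_mul, h q hq Q]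

theorem isSPermutable_sup_normal {H N : Subgroup G} (h : IsSPermutable H) [N.Normal] :
    IsSPermutable (H ⊔ N) := by
  intro q hq Q
  rw [Subgroup.mul_normal H N, mul_assoc,
    ← Subgroup.set_mul_normal_comm ((Q : Subgroup G) : Set G) N, ← mul_assoc,
    h q hq Q, mul_assoc]


theorem card_lt_of_lt [Finite G] {K L : Subgroup G} (h : K < L) :
    Nat.card K < Nat.card L := by
  have hs : (K : Set G) ⊂ (L : Set G) := by
    constructor
    · exact fun x hx => h.le hx
    · intro hsub
      exact h.ne (le_antisymm h.le (fun x hx => hsub hx))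
  have e1 : Nat.card K = (K : Set G).ncard := Nat.card_coe_set_eq _
  have e2 : Nat.card L = (L : Set G).ncard := Nat.card_coe_set_eq _
  rw [e1, e2]
  exact Set.ncard_lt_ncard hs (Set.toFinite _)

theorem card_lt_of_ne_top [Finite G] {K : Subgroup G} (h : K ≠ ⊤) :
    Nat.card K < Nat.card G := by
  have h1 : Nat.card K < Nat.card ((⊤ : Subgroup G)) :=
    card_lt_of_lt (lt_top_iff_ne_top.mpr h)
  have h2 : Nat.card ((⊤ : Subgroup G)) = Nat.card G :=
    Nat.card_congr Subgroup.topEquiv.toEquiv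
  omega

theorem card_quotient_lt [Finite G] {N : Subgroup G} [N.Normal] (h : N ≠ ⊥) :
    Nat.card (G ⧸ N) < Nat.card G := by
  have e : Nat.card G = Nat.card (G ⧸ N) * Nat.card N :=
    Subgroup.card_eq_card_quotient_mul_card_subgroup N
  have h1 : 1 < Nat.card N := by
    haveI : Nontrivial ↥N := (Subgroup.nontrivial_iff_ne_bot N).mpr h
    exact Finite.one_lt_card
  have h2 : 0 < Nat.card (G ⧸ N) := Nat.card_pos
  nlinarith

/-- if every element of `G` can be written `q * h` with `q ∈ Q`, `h ∈ H`, then the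
index of `H` divides the cardinality of `Q`. -/
theorem index_dvd_of_cover [Finite G] {H Q : Subgroup G}
    (hcov : ∀ g : G, ∃ q ∈ Q, ∃ h ∈ H, q * h = g) : H.index ∣ Nat.card Q := by
  classical
  let F : Q ⧸ (H.subgroupOf Q) → G ⧸ H :=
    Quotient.map' (fun q : Q => (q : G)) (by
      intro a b hab
      rw [QuotientGroup.leftRel_apply] at hab ⊢
      simpa [Subgroup.mem_subgroupOf] using hab)
  have hFsurj : Function.Surjective F := by
    intro x
    obtain ⟨g, rfl⟩ := QuotientGroup.mk_surjective x
    obtain ⟨q, hq, h, hh, he⟩ := hcov g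
    refine ⟨Quotient.mk'' ⟨q, hq⟩, ?_⟩
    have e : F (Quotient.mk'' ⟨q, hq⟩) = QuotientGroup.mk q := rfl
    rw [e]
    show QuotientGroup.mk q = QuotientGroup.mk g
    rw [QuotientGroup.eq, ← he]
    simpa using hh
  have hFinj : Function.Injective F := by
    intro a b
    induction a using Quotient.inductionOn' with | h a => ?_
    induction b using Quotient.inductionOn' with | h b => ?_
    intro hab
    have h2 : QuotientGroup.mk (s := H) (a : G) = QuotientGroup.mk (b : G) := hab
    rw [QuotientGroup.eq] at h2
    apply Quotient.sound'
    rw [QuotientGroup.leftRel_apply]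
    simpa [Subgroup.mem_subgroupOf] using h2
  have hcard : Nat.card (G ⧸ H) = Nat.card (Q ⧸ (H.subgroupOf Q)) :=
    (Nat.card_congr (Equiv.ofBijective F ⟨hFinj, hFsurj⟩)).symm
  rw [Subgroup.index_eq_card, hcard, ← Subgroup.index_eq_card]
  exact Subgroup.index_dvd_card _


theorem orderOf_conj_eq (g x : G) : orderOf (g * x * g⁻¹) = orderOf x := by
  have h := orderOf_injective ((MulAut.conj g).toMonoidHom) (MulAut.conj g).injective x
  simpa using h

theorem exists_orderOf_eq_pow_of_mem {q : ℕ} (hq : q.Prime) {Q : Subgroup G}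
    (hQ : IsPGroup q Q) {u : G} (hu : u ∈ Q) : ∃ k, orderOf u = q ^ k := by
  obtain ⟨k, hk⟩ := hQ ⟨u, hu⟩
  have hpow : u ^ (q ^ k) = 1 := by
    have := congrArg (Subtype.val) hk
    simpa using this
  have hd : orderOf u ∣ q ^ k := orderOf_dvd_of_pow_eq_one hpow
  obtain ⟨i, _, he⟩ := (Nat.dvd_prime_pow hq).mp hd
  exact ⟨i, he⟩

theorem exists_sylow_of_orderOf_eq_pow [Finite G] {q k : ℕ} (hq : q.Prime) {x : G}
    (hx : orderOf x = q ^ k) : ∃ Q : Sylow q G, x ∈ Q := by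
  haveI := Fact.mk hq
  have hpg : IsPGroup q (Subgroup.zpowers x) :=
    IsPGroup.iff_card.mpr ⟨k, by rw [Nat.card_zpowers, hx]⟩
  obtain ⟨Q, hle⟩ := hpg.exists_le_sylow
  exact ⟨Q, hle (Subgroup.mem_zpowers x)⟩

/-- The key descent lemma: if `H` is subnormal in `T` and `T ⊆ H * Q` for a `q`-subgroup `Q`,
then every element of `T` of order coprime to `q` lies in `H`. -/
theorem mem_of_coprime_of_SN {q : ℕ} {H T Q : Subgroup G}
    (hQ : ∀ u : G, u ∈ Q → ∃ k : ℕ, orderOf u = q ^ k)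
    (hsn : SN H T) :
    (T : Set G) ⊆ (H : Set G) * (Q : Set G) →
      ∀ x ∈ T, Nat.Coprime (orderOf x) q → x ∈ H := by
  induction hsn with
  | refl => exact fun _ x hx _ => hx
  | @step K L hSN hKL hnorm ih =>
    intro hsub x hxL hcop
    have hHle : H ≤ K := hSN.le
    have hxK : x ∈ K := by
      obtain ⟨h, hh, u, hu, he⟩ := hsub hxL
      have he' : h * u = x := he
      have hhL : h ∈ L := hKL (hHle hh)
      have huL : u ∈ L := by
        have e : u = h⁻¹ * x := by rw [← he']; group
        rw [e]; exact mul_mem (inv_mem hhL) hxL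
      haveI := hnorm
      set π := QuotientGroup.mk' (K.subgroupOf L) with hπ
      have hπh : π ⟨h, hhL⟩ = 1 := by
        rw [QuotientGroup.mk'_apply, QuotientGroup.eq_one_iff]
        simpa [Subgroup.mem_subgroupOf] using hHle hh
      have hπx : π ⟨x, hxL⟩ = π ⟨u, huL⟩ := by
        have e : (⟨x, hxL⟩ : ↥L) = ⟨h, hhL⟩ * ⟨u, huL⟩ := Subtype.ext (by simp [← he'])
        rw [e, map_mul, hπh, one_mul]
      obtain ⟨k, hk⟩ := hQ u hu
      have hd1 : orderOf (π ⟨x, hxL⟩) ∣ orderOf x := by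
        have h1 : orderOf (π ⟨x, hxL⟩) ∣ orderOf (⟨x, hxL⟩ : ↥L) := orderOf_map_dvd π _
        rwa [Subgroup.orderOf_mk] at h1
      have hd2 : orderOf (π ⟨x, hxL⟩) ∣ q ^ k := by
        rw [hπx]
        have h1 : orderOf (π ⟨u, huL⟩) ∣ orderOf (⟨u, huL⟩ : ↥L) := orderOf_map_dvd π _
        rwa [Subgroup.orderOf_mk, hk] at h1
      have hone : orderOf (π ⟨x, hxL⟩) = 1 := Nat.dvd_one.mp (by
        have hco : Nat.Coprime (orderOf x) (q ^ k) := hcop.pow_right k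
        have hg := Nat.dvd_gcd hd1 hd2
        rwa [Nat.coprime_iff_gcd_eq_one.mp hco] at hg)
      have hker : π ⟨x, hxL⟩ = 1 := orderOf_eq_one_iff.mp hone
      have hmem : (⟨x, hxL⟩ : ↥L) ∈ K.subgroupOf L := by
        rw [QuotientGroup.mk'_apply, QuotientGroup.eq_one_iff] at hker
        exact hker
      simpa [Subgroup.mem_subgroupOf] using hmem
    exact ih (fun y hy => hsub (hKL hy)) x hxK hcop

theorem conj_mem_closure {S : Set G} {u : G}
    (hu : ∀ x ∈ S, u * x * u⁻¹ ∈ Subgroup.closure S) :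
    ∀ y ∈ Subgroup.closure S, u * y * u⁻¹ ∈ Subgroup.closure S := by
  intro y hy
  induction hy using Subgroup.closure_induction with
  | mem x hx => exact hu x hx
  | one => simpa using one_mem _
  | mul a b ha hb iha ihb =>
    have e : u * (a * b) * u⁻¹ = (u * a * u⁻¹) * (u * b * u⁻¹) := by group
    rw [e]; exact mul_mem iha ihb
  | inv a ha iha =>
    have e : u * a⁻¹ * u⁻¹ = (u * a * u⁻¹)⁻¹ := by group
    rw [e]; exact inv_mem iha

theorem mem_normalizer_of_conj {S : Set G} {u : G}
    (h1 : ∀ x ∈ S, u * x * u⁻¹ ∈ Subgroup.closure S)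
    (h2 : ∀ x ∈ S, u⁻¹ * x * u ∈ Subgroup.closure S) :
    u ∈ Subgroup.normalizer (Subgroup.closure S : Set G) := by
  rw [Subgroup.mem_normalizer_iff]
  intro y
  constructor
  · intro hy; exact conj_mem_closure h1 y hy
  · intro hy
    have h2' : ∀ x ∈ S, u⁻¹ * x * u⁻¹⁻¹ ∈ Subgroup.closure S := by simpa using h2
    have hres := conj_mem_closure h2' _ hy
    have e : u⁻¹ * (u * y * u⁻¹) * u⁻¹⁻¹ = y := by group
    rwa [e] at hres

theorem closure_normal_of_conj {S : Set G} (hS : ∀ g : G, ∀ x ∈ S, g * x * g⁻¹ ∈ S) :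
    (Subgroup.closure S).Normal := by
  rw [← Subgroup.normalizer_eq_top_iff, eq_top_iff]
  intro g _
  refine mem_normalizer_of_conj (fun x hx => Subgroup.subset_closure (hS g x hx))
    (fun x hx => ?_)
  have := Subgroup.subset_closure (hS g⁻¹ x hx)
  simpa using this

theorem SN_top_of_normalizerCondition [Finite G] (hnc : NormalizerCondition G) :
    ∀ H : Subgroup G, SN H ⊤ := by
  have key : ∀ m : ℕ, ∀ H : Subgroup G, Nat.card G ≤ Nat.card H + m → SN H ⊤ := by
    intro m
    induction m with
    | zero =>
      intro H hle
      have h1 : Nat.card H ≤ Nat.card G := Subgroup.card_le_card_group H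
      have h2 : Nat.card H = Nat.card G := by omega
      have h3 : H = ⊤ := Subgroup.eq_top_of_card_eq H h2
      rw [h3]; exact SN.refl
    | succ m ih =>
      intro H hle
      by_cases htop : H = ⊤
      · rw [htop]; exact SN.refl
      · have hlt := hnc H (lt_top_iff_ne_top.mpr htop)
        have hcard := card_lt_of_lt hlt
        have hsn := ih (Subgroup.normalizer (H : Set G)) (by omega)
        exact SN.prepend Subgroup.le_normalizer Subgroup.normal_in_normalizer hsn
  intro H
  exact key (Nat.card G) H (by omega)

theorem SN_top_of_isPGroup [Finite G] {q : ℕ} (hq : q.Prime) (h : IsPGroup q G)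
    (H : Subgroup G) : SN H ⊤ := by
  haveI := Fact.mk hq
  haveI : Group.IsNilpotent G := h.isNilpotent
  exact SN_top_of_normalizerCondition (normalizerCondition_of_isNilpotent) H


universe u

theorem main_aux : ∀ (n : ℕ) (G : Type u) [Group G] [Finite G], Nat.card G ≤ n →
    ∀ H : Subgroup G, IsSPermutable H → SN H ⊤ := by
  intro n
  induction n with
  | zero =>
    intro G _ _ hcard H _
    have : 0 < Nat.card G := Nat.card_pos
    omega
  | succ n ih =>
    intro G _ _ hcard H hH
    by_cases htop : H = ⊤
    · rw [htop]; exact SN.refl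
    -- Fork A : nontrivial normal subgroup inside H
    by_cases hcore : ∃ N : Subgroup G, N.Normal ∧ N ≠ ⊥ ∧ N ≤ H
    · obtain ⟨N, hN, hNbot, hNH⟩ := hcore
      haveI := hN
      have hqc : Nat.card (G ⧸ N) ≤ n := by
        have := card_quotient_lt (G := G) (N := N) hNbot
        omega
      have hsp : IsSPermutable (H.map (QuotientGroup.mk' N)) := isSPermutable_map_mk' hH N
      have hsn' : SN (H.map (QuotientGroup.mk' N)) ⊤ := ih (G ⧸ N) hqc _ hsp
      have hsn2 := hsn'.comap (QuotientGroup.mk' N)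
      rw [Subgroup.comap_top, Subgroup.comap_map_eq, QuotientGroup.ker_mk',
        sup_eq_left.mpr hNH] at hsn2
      exact hsn2
    have hcore' : ∀ N : Subgroup G, N.Normal → N ≤ H → N = ⊥ := by
      intro N h1 h2
      by_contra h3
      exact hcore ⟨N, h1, h3, h2⟩
    -- helper: induction hypothesis for proper subgroups above H
    have IHsub : ∀ K : Subgroup G, K ≠ ⊤ → H ≤ K → SN H K := by
      intro K hKtop hHK
      have hcardK : Nat.card K ≤ n := by
        have := card_lt_of_ne_top hKtop
        omega
      have hsp := isSPermutable_subgroupOf hH hHK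
      have hsn' : SN (H.subgroupOf K) ⊤ := ih ↥K hcardK _ hsp
      have hsn2 := hsn'.map K.subtype
      rw [Subgroup.subgroupOf_map_subtype, inf_eq_left.mpr hHK] at hsn2
      have e : (⊤ : Subgroup ↥K).map K.subtype = K := by
        rw [← MonoidHom.range_eq_map, Subgroup.range_subtype]
      rwa [e] at hsn2
    -- Fork B : some nontrivial normal subgroup N with H ⊔ N proper
    by_cases hjoin : ∃ N : Subgroup G, N.Normal ∧ N ≠ ⊥ ∧ H ⊔ N ≠ ⊤
    · obtain ⟨N, hN, hNbot, hKtop⟩ := hjoin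
      haveI := hN
      have s1 : SN H (H ⊔ N) := IHsub (H ⊔ N) hKtop le_sup_left
      have hspK : IsSPermutable ((H ⊔ N).map (QuotientGroup.mk' N)) :=
        isSPermutable_map_mk' (isSPermutable_sup_normal hH) N
      have hqcard : Nat.card (G ⧸ N) ≤ n := by
        have := card_quotient_lt (G := G) (N := N) hNbot
        omega
      have s2' : SN ((H ⊔ N).map (QuotientGroup.mk' N)) ⊤ := ih (G ⧸ N) hqcard _ hspK
      have s2 := s2'.comap (QuotientGroup.mk' N)
      rw [Subgroup.comap_top, Subgroup.comap_map_eq, QuotientGroup.ker_mk',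
        sup_assoc, sup_idem] at s2
      exact s1.trans s2
    have hjoin' : ∀ N : Subgroup G, N.Normal → N ≠ ⊥ → H ⊔ N = ⊤ := by
      intro N h1 h2
      by_contra h3
      exact hjoin ⟨N, h1, h2, h3⟩
    -- Fork C : some Sylow subgroup covers G together with H
    by_cases hfull : ∃ (q : ℕ) (_ : q.Prime) (Q : Sylow q G),
        (H : Set G) * ((Q : Subgroup G) : Set G) = Set.univ
    · obtain ⟨q, hq, Q, hQuniv⟩ := hfull
      haveI := Fact.mk hq
      have hcov : ∀ g : G, ∃ u ∈ (Q : Subgroup G), ∃ h ∈ H, u * h = g := by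
        intro g
        have hg : g ∈ ((Q : Subgroup G) : Set G) * (H : Set G) := by
          rw [← hH q hq Q, hQuniv]
          exact Set.mem_univ g
        obtain ⟨u, hu, hh, hhh, he⟩ := hg
        exact ⟨u, hu, hh, hhh, he⟩
      have hidx : H.index ∣ Nat.card (Q : Subgroup G) := index_dvd_of_cover hcov
      obtain ⟨s, hs⟩ := Q.2.exists_card_eq
      rw [hs] at hidx
      obtain ⟨j, _, hje⟩ := (Nat.dvd_prime_pow hq).mp hidx
      -- every element of prime power order r^k (r ≠ q) lies in H
      have hSsub : ∀ x : G, (∃ r : ℕ, r.Prime ∧ r ≠ q ∧ ∃ k, orderOf x = r ^ k) → x ∈ H := by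
        rintro x ⟨r, hr, hrq, k, hk⟩
        haveI := Fact.mk hr
        obtain ⟨R, hxR⟩ := exists_sylow_of_orderOf_eq_pow hr hk
        set T := mulSG H (R : Subgroup G) (hH r hr R) with hTdef
        have hHT : H ≤ T := le_mulSG_left _
        have hRT : (R : Subgroup G) ≤ T := le_mulSG_right _
        obtain ⟨t, ht⟩ := R.2.exists_card_eq
        have hcov2 : ∀ g : ↥T, ∃ u ∈ (R : Subgroup G).subgroupOf T,
            ∃ hh ∈ H.subgroupOf T, u * hh = g := by
          intro g
          have hg : (g : G) ∈ ((R : Subgroup G) : Set G) * (H : Set G) := by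
            rw [← hH r hr R]
            exact g.2
          obtain ⟨u, hu, hh, hhh, he⟩ := hg
          have he' : u * hh = (g : G) := he
          refine ⟨⟨u, hRT hu⟩, ?_, ⟨hh, hHT hhh⟩, ?_, ?_⟩
          · simp only [Subgroup.mem_subgroupOf]; exact hu
          · simpa [Subgroup.mem_subgroupOf] using hhh
          · exact Subtype.ext he'
        have hidx2 : (H.subgroupOf T).index ∣ Nat.card ((R : Subgroup G).subgroupOf T) :=
          index_dvd_of_cover hcov2
        have hcardR : Nat.card ((R : Subgroup G).subgroupOf T) = Nat.card (R : Subgroup G) :=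
          Nat.card_congr (Subgroup.subgroupOfEquivOfLe hRT).toEquiv
        rw [hcardR, ht] at hidx2
        have hidx3 : (H.subgroupOf T).index ∣ q ^ j := by
          rw [← hje]
          exact ⟨T.index, (Subgroup.relIndex_mul_index hHT).symm⟩
        have h1 : (H.subgroupOf T).index = 1 := by
          have hco : Nat.Coprime (r ^ t) (q ^ j) :=
            Nat.Coprime.pow t j ((Nat.coprime_primes hr hq).mpr hrq)
          have hg := Nat.dvd_gcd hidx2 hidx3
          rwa [Nat.coprime_iff_gcd_eq_one.mp hco, Nat.dvd_one] at hg
        have hTH : T ≤ H := Subgroup.subgroupOf_eq_top.mp (Subgroup.index_eq_one.mp h1)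
        exact hTH (hRT hxR)
      -- the closure of all such elements is a normal subgroup inside H
      have hKle : Subgroup.closure {x : G | ∃ r : ℕ, r.Prime ∧ r ≠ q ∧ ∃ k, orderOf x = r ^ k}
          ≤ H := (Subgroup.closure_le H).mpr (fun x hx => hSsub x hx)
      have hKnormal : (Subgroup.closure
          {x : G | ∃ r : ℕ, r.Prime ∧ r ≠ q ∧ ∃ k, orderOf x = r ^ k}).Normal :=
        closure_normal_of_conj (by
          rintro g x ⟨r, hr, hrq, k, hk⟩
          exact ⟨r, hr, hrq, k, by rw [orderOf_conj_eq, hk]⟩)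
      have hKbot := hcore' _ hKnormal hKle
      -- G is a q-group
      have hpg : IsPGroup q G := by
        intro x
        have hx0 : orderOf x ≠ 0 := (orderOf_pos x).ne'
        have hqpow : ∃ k, orderOf x = q ^ k := by
          refine ⟨(orderOf x).primeFactorsList.length,
            Nat.eq_prime_pow_of_unique_prime_dvd hx0 ?_⟩
          intro r hr hrd
          by_contra hrq
          set m := orderOf x with hm
          set v := m.factorization r with hv
          set d := m / r ^ v with hd
          have hdd : d ∣ m := Nat.ordCompl_dvd m r
          have hdpos : 0 < d := Nat.ordCompl_pos r hx0
          have hyo : orderOf (x ^ d) = r ^ v := by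
            rw [orderOf_pow, ← hm, Nat.gcd_eq_right hdd]
            have hsplit : r ^ v * d = m := Nat.ordProj_mul_ordCompl_eq_self m r
            rw [← hsplit, Nat.mul_div_cancel _ hdpos]
          have hymem : x ^ d ∈ Subgroup.closure
              {y : G | ∃ r' : ℕ, r'.Prime ∧ r' ≠ q ∧ ∃ k, orderOf y = r' ^ k} :=
            Subgroup.subset_closure ⟨r, hr, hrq, v, hyo⟩
          rw [hKbot, Subgroup.mem_bot] at hymem
          have hcon : orderOf (x ^ d) = 1 := by rw [hymem, orderOf_one]
          rw [hyo] at hcon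
          have hv1 : 0 < v := Nat.Prime.factorization_pos_of_dvd hr hx0 hrd
          have : 1 < r ^ v := Nat.one_lt_pow hv1.ne' hr.two_le
          omega
        obtain ⟨k, hk⟩ := hqpow
        exact ⟨k, by rw [← hk]; exact pow_orderOf_eq_one x⟩
      exact SN_top_of_isPGroup hq hpg H
    -- Fork D : all products H * Q are proper
    · have hprop : ∀ q : ℕ, q.Prime → q ∣ Nat.card G →
          ∀ x ∈ H, Nat.Coprime (orderOf x) q → x = 1 := by
        intro q hq hqdvd x hxH hcop
        haveI := Fact.mk hq
        -- every Sylow q-subgroup "normalizes" the coprime part of H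
        have hsylnorm : ∀ Q : Sylow q G, ∀ u ∈ (Q : Subgroup G),
            ∀ y ∈ {y : G | y ∈ H ∧ Nat.Coprime (orderOf y) q},
            u * y * u⁻¹ ∈ {y : G | y ∈ H ∧ Nat.Coprime (orderOf y) q} := by
          intro Q u hu y hyS
          set T := mulSG H (Q : Subgroup G) (hH q hq Q) with hTdef
          have hTtop : T ≠ ⊤ := by
            intro he
            apply hfull
            refine ⟨q, hq, Q, ?_⟩
            have e0 : (T : Set G) = Set.univ := by rw [he]; exact Subgroup.coe_top
            rwa [coe_mulSG] at e0
          have hHT : H ≤ T := le_mulSG_left _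
          have hQT : (Q : Subgroup G) ≤ T := le_mulSG_right _
          have hsn : SN H T := IHsub T hTtop hHT
          have hmem := mem_of_coprime_of_SN
            (fun u hu => exists_orderOf_eq_pow_of_mem hq Q.2 hu) hsn
            (coe_mulSG _).subset
          have hyT : u * y * u⁻¹ ∈ T :=
            mul_mem (mul_mem (hQT hu) (hHT hyS.1)) (inv_mem (hQT hu))
          have hco : Nat.Coprime (orderOf (u * y * u⁻¹)) q := by
            rw [orderOf_conj_eq]; exact hyS.2
          exact ⟨hmem _ hyT hco, hco⟩
        have hHnorm : ∀ hh ∈ H, ∀ y ∈ {y : G | y ∈ H ∧ Nat.Coprime (orderOf y) q},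
            hh * y * hh⁻¹ ∈ {y : G | y ∈ H ∧ Nat.Coprime (orderOf y) q} := by
          intro hh hhh y hyS
          exact ⟨mul_mem (mul_mem hhh hyS.1) (inv_mem hhh),
            by rw [orderOf_conj_eq]; exact hyS.2⟩
        -- the subgroup generated by q-elements is nontrivial and normal
        have hS'norm : (Subgroup.closure {y : G | ∃ k, orderOf y = q ^ k}).Normal :=
          closure_normal_of_conj (by
            rintro g y ⟨k, hk⟩
            exact ⟨k, by rw [orderOf_conj_eq, hk]⟩)
        have hS'bot : Subgroup.closure {y : G | ∃ k, orderOf y = q ^ k} ≠ ⊥ := by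
          obtain ⟨z, hz⟩ := exists_prime_orderOf_dvd_card' q hqdvd
          intro hbot
          have hz2 : z ∈ Subgroup.closure {y : G | ∃ k, orderOf y = q ^ k} :=
            Subgroup.subset_closure ⟨1, by rw [hz, pow_one]⟩
          rw [hbot, Subgroup.mem_bot] at hz2
          rw [hz2, orderOf_one] at hz
          exact hq.one_lt.ne hz
        have hsup : H ⊔ Subgroup.closure {y : G | ∃ k, orderOf y = q ^ k} = ⊤ :=
          hjoin' _ hS'norm hS'bot
        have hVnorm_top : Subgroup.normalizer ((Subgroup.closure
            {y : G | y ∈ H ∧ Nat.Coprime (orderOf y) q} : Subgroup G) : Set G) = ⊤ := by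
          rw [eq_top_iff, ← hsup, sup_le_iff]
          constructor
          · intro hh hhh
            refine mem_normalizer_of_conj
              (fun y hy => Subgroup.subset_closure (hHnorm hh hhh y hy))
              (fun y hy => ?_)
            have := Subgroup.subset_closure (hHnorm hh⁻¹ (inv_mem hhh) y hy)
            simpa using this
          · rw [Subgroup.closure_le]
            intro u hu
            obtain ⟨k, hk⟩ := hu
            obtain ⟨Q, huQ⟩ := exists_sylow_of_orderOf_eq_pow hq hk
            refine mem_normalizer_of_conj
              (fun y hy => Subgroup.subset_closure (hsylnorm Q u huQ y hy))
              (fun y hy => ?_)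
            have := Subgroup.subset_closure (hsylnorm Q u⁻¹ (inv_mem huQ) y hy)
            simpa using this
        have hVnormal : (Subgroup.closure
            {y : G | y ∈ H ∧ Nat.Coprime (orderOf y) q}).Normal :=
          Subgroup.normalizer_eq_top_iff.mp hVnorm_top
        have hVle : Subgroup.closure {y : G | y ∈ H ∧ Nat.Coprime (orderOf y) q} ≤ H :=
          (Subgroup.closure_le H).mpr (fun y hy => hy.1)
        have hVbot := hcore' _ hVnormal hVle
        have hxV : x ∈ Subgroup.closure {y : G | y ∈ H ∧ Nat.Coprime (orderOf y) q} :=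
          Subgroup.subset_closure ⟨hxH, hcop⟩
        rwa [hVbot, Subgroup.mem_bot] at hxV
      -- endgame: split on the number of prime divisors of |G|
      by_cases hnt : ∃ p r : ℕ, p.Prime ∧ r.Prime ∧ p ≠ r ∧ p ∣ Nat.card G ∧ r ∣ Nat.card G
      · obtain ⟨p, r, hp, hr, hpr, hpd, hrd⟩ := hnt
        have hHbot : H = ⊥ := by
          rw [eq_bot_iff]
          intro x hxH
          rw [Subgroup.mem_bot]
          by_contra hx1
          have hx0 : orderOf x ≠ 0 := (orderOf_pos x).ne'
          have hx1' : orderOf x ≠ 1 := fun he => hx1 (orderOf_eq_one_iff.mp he)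
          set m := orderOf x with hm
          set t := m.minFac with htdef
          have ht : t.Prime := Nat.minFac_prime hx1'
          have htd : t ∣ m := Nat.minFac_dvd m
          obtain ⟨q', hq', hq'd, hq't⟩ : ∃ q', q'.Prime ∧ q' ∣ Nat.card G ∧ q' ≠ t := by
            by_cases hc : t = p
            · exact ⟨r, hr, hrd, fun he => hpr (by rw [← hc, ← he])⟩
            · exact ⟨p, hp, hpd, fun he => hc he.symm⟩
          set v := m.factorization t with hv
          set d := m / t ^ v with hd
          have hdd : d ∣ m := Nat.ordCompl_dvd m t
          have hdpos : 0 < d := Nat.ordCompl_pos t hx0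
          have hyo : orderOf (x ^ d) = t ^ v := by
            rw [orderOf_pow, ← hm, Nat.gcd_eq_right hdd]
            have hsplit : t ^ v * d = m := Nat.ordProj_mul_ordCompl_eq_self m t
            rw [← hsplit, Nat.mul_div_cancel _ hdpos]
          have hyH : x ^ d ∈ H := pow_mem hxH d
          have hco : Nat.Coprime (orderOf (x ^ d)) q' := by
            rw [hyo]
            exact Nat.Coprime.pow_left v
              ((Nat.coprime_primes ht hq').mpr (fun he => hq't he.symm))
          have hy1 := hprop q' hq' hq'd (x ^ d) hyH hco
          have hcon : orderOf (x ^ d) = 1 := by rw [hy1, orderOf_one]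
          rw [hyo] at hcon
          have hv1 : 0 < v := Nat.Prime.factorization_pos_of_dvd ht hx0 htd
          have : 1 < t ^ v := Nat.one_lt_pow hv1.ne' ht.two_le
          omega
        rw [hHbot]
        refine SN.step SN.refl bot_le ?_
        rw [Subgroup.bot_subgroupOf]
        infer_instance
      · by_cases hone : Nat.card G = 1
        · exfalso
          apply htop
          apply Subgroup.eq_top_of_card_eq
          have h1 : Nat.card H ≤ Nat.card G := Subgroup.card_le_card_group H
          have h2 : 0 < Nat.card H := Nat.card_pos
          omega
        · set p := (Nat.card G).minFac with hpdef
          have hp : p.Prime := Nat.minFac_prime hone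
          haveI := Fact.mk hp
          have hpd : p ∣ Nat.card G := Nat.minFac_dvd _
          have hcardG : Nat.card G ≠ 0 := Nat.card_pos.ne'
          have hcard' : Nat.card G = p ^ (Nat.card G).primeFactorsList.length := by
            refine Nat.eq_prime_pow_of_unique_prime_dvd hcardG ?_
            intro r hr hrd
            by_contra hne
            exact hnt ⟨p, r, hp, hr, fun he => hne he.symm, hpd, hrd⟩
          have hpg : IsPGroup p G := IsPGroup.iff_card.mpr ⟨_, hcard'⟩
          exact SN_top_of_isPGroup hp hpg H

end KegelAux

/-- An s-permutable subgroup of a finite group is subnormal. -/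
theorem isSubnormal_of_isSPermutable {G : Type*} [Group G] [Finite G] (H : Subgroup G)
    (h : IsSPermutable H) : IsSubnormal H :=
  (KegelAux.main_aux (Nat.card G) G le_rfl H h).isSubnormal
end

section
/- Let G be a finite group with subgroups H ≤ K ≤ G. If H is s-permutable in G, then H is s-permutable in K. -/
open Pointwise

/-- The coercion of a subgroup is closed under set inversion. -/
lemma coe_set_inv' {G : Type*} [Group G] (A : Subgroup G) : (A : Set G)⁻¹ = (A : Set G) := by
  ext x
  simp [Set.mem_inv]

/-- If two subgroups permute (as sets), then their set product is the carrier of their join. -/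
lemma coe_sup_of_mul_comm {G : Type*} [Group G] (A B : Subgroup G)
    (hc : (A : Set G) * (B : Set G) = (B : Set G) * (A : Set G)) :
    ((A ⊔ B : Subgroup G) : Set G) = (A : Set G) * (B : Set G) := by
  let L : Subgroup G :=
  { carrier := (A : Set G) * (B : Set G)
    one_mem' := ⟨1, A.one_mem, 1, B.one_mem, one_mul 1⟩
    mul_mem' := by
      rintro x y ⟨a, ha, b, hb, rfl⟩ ⟨a', ha', b', hb', rfl⟩
      have hba : b * a' ∈ (B : Set G) * (A : Set G) := ⟨b, hb, a', ha', rfl⟩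
      rw [← hc] at hba
      obtain ⟨a'', ha'', b'', hb'', he⟩ := hba
      refine ⟨a * a'', A.mul_mem ha ha'', b'' * b', B.mul_mem hb'' hb', ?_⟩
      have he' : a'' * b'' = b * a' := he
      show a * a'' * (b'' * b') = a * b * (a' * b')
      rw [mul_assoc a a'', ← mul_assoc a'', he']
      group
    inv_mem' := by
      rintro x ⟨a, ha, b, hb, rfl⟩
      have : b⁻¹ * a⁻¹ ∈ (B : Set G) * (A : Set G) := ⟨b⁻¹, B.inv_mem hb, a⁻¹, A.inv_mem ha, rfl⟩
      rw [← hc] at this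
      simpa [mul_inv_rev] using this }
  have hL : A ⊔ B = L := by
    rw [Subgroup.sup_eq_closure_mul]
    exact Subgroup.closure_eq L
  rw [hL]
  rfl

/-- If `H ≤ K ≤ G` and `H` is s-permutable in `G`, then `H` is s-permutable in `K`. -/
theorem isSPermutable_subgroupOf {G : Type*} [Group G] [Finite G] (H K : Subgroup G)
    (hHK : H ≤ K) (h : IsSPermutable H) : IsSPermutable (H.subgroupOf K) := by
  intro q hq Q
  haveI := Fact.mk hq
  -- push the Sylow subgroup `Q` of `K` into `G`
  set Q' : Subgroup G := (Q : Subgroup K).map K.subtype with hQ'def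
  have hQ'pg : IsPGroup q Q' := Q.isPGroup'.map _
  obtain ⟨P, hQP⟩ := hQ'pg.exists_le_sylow
  -- `Q` is exactly `P ⊓ K` transferred to `K`
  have hmax : (P : Subgroup G).subgroupOf K = (Q : Subgroup K) := by
    refine Q.3 (P.isPGroup'.comap_subtype) ?_
    rw [Subgroup.subgroupOf, ← Subgroup.map_le_iff_le_comap]
    exact hQP
  have hQ'eq : Q' = (P : Subgroup G) ⊓ K := by
    rw [hQ'def, ← hmax, Subgroup.subgroupOf_map_subtype]
  -- `H` permutes with `P`
  have hHP := h q hq P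
  have hsup : ((H ⊔ (P : Subgroup G) : Subgroup G) : Set G)
      = (H : Set G) * ((P : Subgroup G) : Set G) := coe_sup_of_mul_comm _ _ hHP
  -- key computation: `H * Q' = (H ⊔ P) ⊓ K`
  have key : (H : Set G) * (Q' : Set G) = (((H ⊔ (P : Subgroup G)) ⊓ K : Subgroup G) : Set G) := by
    have h1 : (H : Set G) * (Q' : Set G)
        = ((H : Set G) * ((P : Subgroup G) : Set G)) ∩ (K : Set G) := by
      rw [hQ'eq]
      ext x
      constructor
      · rintro ⟨a, ha, b, hb, rfl⟩
        have hb' : b ∈ (P : Subgroup G) ⊓ K := hb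
        exact ⟨⟨a, ha, b, hb'.1, rfl⟩, K.mul_mem (hHK ha) hb'.2⟩
      · rintro ⟨⟨a, ha, b, hb, rfl⟩, hK⟩
        have hbK : b ∈ K := by
          have : a⁻¹ * (a * b) ∈ K := K.mul_mem (K.inv_mem (hHK ha)) hK
          simpa [← mul_assoc] using this
        exact ⟨a, ha, b, show b ∈ (P : Subgroup G) ⊓ K from ⟨hb, hbK⟩, rfl⟩
    rw [h1, ← hsup, Subgroup.coe_inf]
  have key2 : (Q' : Set G) * (H : Set G)
      = (((H ⊔ (P : Subgroup G)) ⊓ K : Subgroup G) : Set G) := by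
    calc (Q' : Set G) * (H : Set G)
        = ((H : Set G) * (Q' : Set G))⁻¹ := by
          rw [mul_inv_rev, coe_set_inv', coe_set_inv']
      _ = ((((H ⊔ (P : Subgroup G)) ⊓ K : Subgroup G) : Set G))⁻¹ := by rw [key]
      _ = _ := coe_set_inv' _
  -- pull everything back to `K` via the injective map `K.subtype`
  have hinj : Function.Injective (Set.image (K.subtype : K →* G)) :=
    Set.image_injective.mpr Subtype.coe_injective
  apply hinj
  have e1 : (K.subtype : K →* G) '' ((H.subgroupOf K : Subgroup K) : Set K) = (H : Set G) := by
    rw [← Subgroup.coe_map, Subgroup.subgroupOf_map_subtype, inf_eq_left.mpr hHK]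
  have e2 : (K.subtype : K →* G) '' ((Q : Subgroup K) : Set K) = (Q' : Set G) :=
    (Subgroup.coe_map _ _).symm
  rw [Set.image_mul, Set.image_mul, e1, e2, key, key2]
end

section
/- Let G be a finite group and H a Hall subgroup of G (i.e., the order of H is coprime to its index [G:H]). If H is s-permutable in G, then H is normal in G. -/
open Pointwise

section Aux
variable {G : Type*} [Group G]

/-- The product of two permuting subgroups is a subgroup. -/
def mulSubgroup (H K : Subgroup G) (hc : (H : Set G) * K = (K : Set G) * H) : Subgroup G where
  carrier := (H : Set G) * K
  one_mem' := ⟨1, H.one_mem, 1, K.one_mem, one_mul 1⟩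
  mul_mem' := by
    rintro a b ⟨h₁, hh₁, k₁, hk₁, rfl⟩ ⟨h₂, hh₂, k₂, hk₂, rfl⟩
    have hm : (k₁ : G) * h₂ ∈ (K : Set G) * H := ⟨k₁, hk₁, h₂, hh₂, rfl⟩
    rw [← hc] at hm
    obtain ⟨h₃, hh₃, k₃, hk₃, heq⟩ := hm
    refine ⟨h₁ * h₃, H.mul_mem hh₁ hh₃, k₃ * k₂, K.mul_mem hk₃ hk₂, ?_⟩
    calc h₁ * h₃ * (k₃ * k₂) = h₁ * (h₃ * k₃) * k₂ := by group
    _ = h₁ * (k₁ * h₂) * k₂ := by rw [show h₃ * k₃ = k₁ * h₂ from heq]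
    _ = h₁ * k₁ * (h₂ * k₂) := by group
  inv_mem' := by
    rintro a ⟨h₁, hh₁, k₁, hk₁, rfl⟩
    have hm : (k₁ : G)⁻¹ * h₁⁻¹ ∈ (K : Set G) * H := ⟨k₁⁻¹, K.inv_mem hk₁, h₁⁻¹, H.inv_mem hh₁, rfl⟩
    rw [← hc] at hm
    obtain ⟨h₂, hh₂, k₂, hk₂, heq⟩ := hm
    exact ⟨h₂, hh₂, k₂, hk₂, by show h₂ * k₂ = (h₁ * k₁)⁻¹; rw [show h₂ * k₂ = k₁⁻¹ * h₁⁻¹ from heq, mul_inv_rev]⟩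

theorem coe_sup_of_comm (H K : Subgroup G) (hc : (H : Set G) * K = (K : Set G) * H) :
    ((H ⊔ K : Subgroup G) : Set G) = (H : Set G) * K := by
  have h1 : H ⊔ K ≤ mulSubgroup H K hc := by
    refine sup_le (fun h hh => ⟨h, hh, 1, K.one_mem, mul_one h⟩)
      (fun k hk => ⟨1, H.one_mem, k, hk, one_mul k⟩)
  have h2 : mulSubgroup H K hc ≤ H ⊔ K := by
    rintro a ⟨h₁, hh₁, k₁, hk₁, rfl⟩
    exact Subgroup.mul_mem _ (Subgroup.mem_sup_left hh₁) (Subgroup.mem_sup_right hk₁)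
  exact le_antisymm (fun x hx => h1 hx) h2

theorem relindex_sup_dvd_card (H K : Subgroup G)
    (hc : (H : Set G) * K = (K : Set G) * H) :
    H.relIndex (H ⊔ K) ∣ Nat.card K := by
  have key : H.relIndex (H ⊔ K) = H.relIndex K := by
    show (H.subgroupOf (H ⊔ K)).index = (H.subgroupOf K).index
    unfold Subgroup.index
    refine (Nat.card_eq_of_bijective ?_ ?_).symm
    · exact Quotient.map' (fun k => (⟨(k : G), Subgroup.mem_sup_right k.2⟩ : (H ⊔ K : Subgroup G)))
        (fun a b hab => by
          rw [QuotientGroup.leftRel_apply] at hab ⊢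
          simpa [Subgroup.mem_subgroupOf] using hab)
    · constructor
      · rintro ⟨a⟩ ⟨b⟩ hab
        apply Quotient.sound'
        rw [QuotientGroup.leftRel_apply]
        have := Quotient.exact' hab
        rw [QuotientGroup.leftRel_apply] at this
        simpa [Subgroup.mem_subgroupOf] using this
      · rintro ⟨s⟩
        have hs : (s : G) ∈ ((H ⊔ K : Subgroup G) : Set G) := s.2
        rw [coe_sup_of_comm H K hc, hc] at hs
        obtain ⟨k, hk, h, hh, heq⟩ := hs
        refine ⟨Quotient.mk'' ⟨k, hk⟩, ?_⟩
        apply Quotient.sound'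
        rw [QuotientGroup.leftRel_apply]
        simp only [Subgroup.mem_subgroupOf]
        show (k : G)⁻¹ * s ∈ H
        rw [← heq]
        simpa using hh
  rw [key, ← Subgroup.inf_relIndex_right]
  exact Subgroup.index_dvd_card _

end Aux

/-- An s-permutable Hall subgroup of a finite group is normal. -/
theorem normal_of_isSPermutable_hall {G : Type*} [Group G] [Finite G] (H : Subgroup G)
    (hHall : Nat.Coprime (Nat.card H) H.index) (h : IsSPermutable H) : H.Normal := by
  have hH0 : Nat.card H ≠ 0 := Nat.card_pos.ne'
  -- Step 1: every Sylow q-subgroup of G for q ∣ |H| is contained in H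
  have step1 : ∀ q : ℕ, q.Prime → q ∣ Nat.card H → ∀ Q : Sylow q G, (Q : Subgroup G) ≤ H := by
    intro q hq hqH Q
    have hc := h q hq Q
    have hrel1 : H.relIndex (H ⊔ (Q : Subgroup G)) ∣ Nat.card (Q : Subgroup G) :=
      relindex_sup_dvd_card H Q hc
    have hrel2 : H.relIndex (H ⊔ (Q : Subgroup G)) ∣ H.index :=
      Subgroup.relIndex_dvd_index_of_le le_sup_left
    haveI : Fact q.Prime := ⟨hq⟩
    have hQcard : Nat.card (Q : Subgroup G) = q ^ ((Nat.card G).factorization q) :=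
      Q.card_eq_multiplicity
    have hqind : ¬ q ∣ H.index := by
      intro hd
      exact hq.ne_one (Nat.eq_one_of_dvd_one (hHall ▸ Nat.dvd_gcd hqH hd))
    have cop : Nat.Coprime (q ^ ((Nat.card G).factorization q)) H.index :=
      Nat.Coprime.pow_left _ ((Nat.Prime.coprime_iff_not_dvd hq).mpr hqind)
    have hone : H.relIndex (H ⊔ (Q : Subgroup G)) = 1 :=
      Nat.eq_one_of_dvd_one (cop ▸ Nat.dvd_gcd (hQcard ▸ hrel1) hrel2)
    exact le_sup_right.trans (Subgroup.relIndex_eq_one.mp hone)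
  -- K: the subgroup generated by all such Sylow subgroups
  set K : Subgroup G :=
    ⨆ (q : {q : ℕ // q.Prime ∧ q ∣ Nat.card H}) (Q : Sylow q.1 G), (Q : Subgroup G) with hK
  have hKle : K ≤ H := iSup_le fun q => iSup_le fun Q => step1 q.1 q.2.1 q.2.2 Q
  have hK0 : Nat.card K ≠ 0 := Nat.card_pos.ne'
  -- K is normal
  have hKnormal : K.Normal := by
    constructor
    intro n hn g
    have hmap : K.map (MulAut.conj g).toMonoidHom ≤ K := by
      rw [hK, Subgroup.map_le_iff_le_comap]
      refine iSup_le fun q => iSup_le fun Q => ?_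
      rw [← Subgroup.map_le_iff_le_comap]
      have : (Q : Subgroup G).map (MulAut.conj g).toMonoidHom = ↑(MulAut.conj g • Q) := by
        rw [Sylow.pointwise_smul_def, Subgroup.pointwise_smul_def]
        congr 1
      rw [this]
      exact le_iSup_of_le q (le_iSup (fun Q' : Sylow q.1 G => (Q' : Subgroup G))
        (MulAut.conj g • Q))
    exact hmap ⟨n, hn, rfl⟩
  -- |H| divides |K|
  have hcard : Nat.card H ∣ Nat.card K := by
    rw [← Nat.factorization_le_iff_dvd hH0 hK0, Finsupp.le_def]
    intro q
    by_cases hq : q.Prime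
    · by_cases hdvd : q ∣ Nat.card H
      · haveI : Fact q.Prime := ⟨hq⟩
        obtain ⟨Q⟩ : Nonempty (Sylow q G) := inferInstance
        have hQK : (Q : Subgroup G) ≤ K := le_iSup_of_le ⟨q, hq, hdvd⟩
          (le_iSup (fun Q' : Sylow q G => (Q' : Subgroup G)) Q)
        have h1 : q ^ ((Nat.card G).factorization q) ∣ Nat.card K := by
          rw [← Q.card_eq_multiplicity]
          exact Subgroup.card_dvd_of_le hQK
        have h2 : (Nat.card G).factorization q ≤ (Nat.card K).factorization q :=
          (Nat.Prime.pow_dvd_iff_le_factorization hq hK0).mp h1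
        have hG0 : Nat.card G ≠ 0 := Nat.card_pos.ne'
        have h3 : (Nat.card H).factorization q ≤ (Nat.card G).factorization q := by
          have hdG : Nat.card H ∣ Nat.card G := Subgroup.card_subgroup_dvd_card H
          exact Finsupp.le_def.mp ((Nat.factorization_le_iff_dvd hH0 hG0).mpr hdG) q
        exact h3.trans h2
      · simp [Nat.factorization_eq_zero_of_not_dvd hdvd]
    · simp [Nat.factorization_eq_zero_of_not_prime _ hq]
  have hKH : K = H := Subgroup.eq_of_le_of_card_ge hKle (Nat.le_of_dvd Nat.card_pos hcard)
  exact hKH ▸ hKnormal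
end

section
/- Let G be a finite group and let H and K be subgroups of G. If H and K are both s-permutable in G, then H ∩ K is s-permutable in G. -/
open Pointwise

section Aux

variable {G : Type*} [Group G]

lemma mul_comm_of_eq_coe {C H K : Subgroup G} (h : (C : Set G) = (H : Set G) * (K : Set G)) :
    (H : Set G) * (K : Set G) = (K : Set G) * (H : Set G) := by
  have h2 : (C : Set G) = (K : Set G) * (H : Set G) := by
    conv_lhs => rw [← inv_coe_set (H := C), h, mul_inv_rev, inv_coe_set, inv_coe_set]
  rw [← h, h2]

lemma coe_sup_of_mul_comm_s9 {H K : Subgroup G}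
    (h : (H : Set G) * (K : Set G) = (K : Set G) * (H : Set G)) :
    ((H ⊔ K : Subgroup G) : Set G) = (H : Set G) * (K : Set G) := by
  let S : Subgroup G :=
    { carrier := (H : Set G) * (K : Set G)
      one_mem' := ⟨1, H.one_mem, 1, K.one_mem, one_mul 1⟩
      mul_mem' := by
        rintro a b ⟨h1, hh1, k1, hk1, rfl⟩ ⟨h2, hh2, k2, hk2, rfl⟩
        have : k1 * h2 ∈ (H : Set G) * (K : Set G) := by
          rw [h]; exact ⟨k1, hk1, h2, hh2, rfl⟩
        obtain ⟨h3, hh3, k3, hk3, heq⟩ := this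
        refine ⟨h1 * h3, H.mul_mem hh1 hh3, k3 * k2, K.mul_mem hk3 hk2, ?_⟩
        show h1 * h3 * (k3 * k2) = h1 * k1 * (h2 * k2)
        have heq' : h3 * k3 = k1 * h2 := heq
        rw [← mul_assoc, mul_assoc h1, heq']; group
      inv_mem' := by
        rintro a ⟨h1, hh1, k1, hk1, rfl⟩
        have : k1⁻¹ * h1⁻¹ ∈ (K : Set G) * (H : Set G) :=
          ⟨k1⁻¹, K.inv_mem hk1, h1⁻¹, H.inv_mem hh1, rfl⟩
        rw [← h] at this
        simpa [mul_inv_rev] using this }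
  have hS : H ⊔ K = S := by
    apply le_antisymm
    · exact sup_le (fun x hx => ⟨x, hx, 1, K.one_mem, mul_one x⟩)
        (fun x hx => ⟨1, H.one_mem, x, hx, one_mul x⟩)
    · rintro x ⟨a, ha, b, hb, rfl⟩
      exact Subgroup.mul_mem _ (le_sup_left (a := H) ha) (le_sup_right (b := K) hb)
  rw [hS]; rfl

lemma card_image_mk_dvd (X Y : Subgroup G) :
    Nat.card ((Y : Set G).image (QuotientGroup.mk : G → G ⧸ X) : Set (G ⧸ X)) ∣ Nat.card Y := by
  classical
  let φ : (Y ⧸ (X.subgroupOf Y)) → G ⧸ X :=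
    Quotient.map' (fun y => (y : G)) (by
      intro a b hab
      rw [QuotientGroup.leftRel_apply] at hab ⊢
      simpa [Subgroup.mem_subgroupOf] using hab)
  have hinj : Function.Injective φ := by
    intro a b
    induction a using Quotient.inductionOn' with | h a =>
    induction b using Quotient.inductionOn' with | h b =>
    intro hab
    have hab' : ((a : G) : G ⧸ X) = ((b : G) : G ⧸ X) := hab
    rw [QuotientGroup.eq] at hab'
    apply Quotient.sound'
    rw [QuotientGroup.leftRel_apply]
    simpa [Subgroup.mem_subgroupOf] using hab'
  have hrange : Set.range φ = (Y : Set G).image (QuotientGroup.mk : G → G ⧸ X) := by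
    ext c
    constructor
    · rintro ⟨d, rfl⟩
      induction d using Quotient.inductionOn' with | h d =>
      exact ⟨(d : G), d.2, rfl⟩
    · rintro ⟨y, hy, rfl⟩
      exact ⟨Quotient.mk'' ⟨y, hy⟩, rfl⟩
  rw [← hrange, Nat.card_range_of_injective hinj]
  exact Subgroup.card_quotient_dvd_card _

lemma card_sup_of_mul_comm {X Y : Subgroup G}
    (h : (X : Set G) * (Y : Set G) = (Y : Set G) * (X : Set G)) :
    ∃ t, t ∣ Nat.card Y ∧ Nat.card (X ⊔ Y : Subgroup G) = Nat.card X * t := by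
  have hsup : ((X ⊔ Y : Subgroup G) : Set G) = (Y : Set G) * (X : Set G) :=
    (coe_sup_of_mul_comm_s9 h).trans h
  refine ⟨Nat.card ((Y : Set G).image (QuotientGroup.mk : G → G ⧸ X) : Set (G ⧸ X)),
    card_image_mk_dvd X Y, ?_⟩
  have h1 : Nat.card (X ⊔ Y : Subgroup G) =
      Nat.card (((Y : Set G) * (X : Set G)) : Set G) := by
    rw [← hsup]; rfl
  rw [h1, Subgroup.card_mul_eq_card_subgroup_mul_card_quotient X (Y : Set G), mul_comm]

lemma isSPermutable_restrict {H A : Subgroup G} (hH : IsSPermutable H) (hHA : H ≤ A)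
    {p : ℕ} (pp : p.Prime) (R : Sylow p A) :
    (H : Set G) * (((R : Subgroup A).map A.subtype : Subgroup G) : Set G) =
      (((R : Subgroup A).map A.subtype : Subgroup G) : Set G) * (H : Set G) := by
  haveI := Fact.mk pp
  set Rm : Subgroup G := (R : Subgroup A).map A.subtype with hRm
  have hRmA : Rm ≤ A := Subgroup.map_subtype_le _
  have hpRm : IsPGroup p Rm := R.2.map _
  obtain ⟨Rs, hle⟩ := hpRm.exists_le_sylow
  have hint : (Rs : Subgroup G) ⊓ A = Rm := by
    have h1 : Rm.subgroupOf A = R :=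
      Subgroup.comap_map_eq_self_of_injective A.subtype_injective _
    have hpg : IsPGroup p (((Rs : Subgroup G) ⊓ A).subgroupOf A) :=
      (Rs.2.to_le inf_le_left).of_equiv (Subgroup.subgroupOfEquivOfLe inf_le_right).symm
    have hRle : R ≤ ((Rs : Subgroup G) ⊓ A).subgroupOf A := by
      rw [← h1]
      exact Subgroup.comap_mono (le_inf hle hRmA)
    have h2 := R.3 hpg hRle
    have h3 := congrArg (fun X : Subgroup A => X.map A.subtype) h2
    simpa [Subgroup.subgroupOf_map_subtype, inf_assoc, ← hRm,
      inf_of_le_left hRmA] using h3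
  have hded := Subgroup.mul_inf_assoc H (Rs : Subgroup G) A hHA
  rw [hint] at hded
  have hHRs : (H : Set G) * ((Rs : Subgroup G) : Set G) =
      ((H ⊔ (Rs : Subgroup G) : Subgroup G) : Set G) :=
    (coe_sup_of_mul_comm_s9 (hH p pp Rs)).symm
  have : (((H ⊔ (Rs : Subgroup G)) ⊓ A : Subgroup G) : Set G) = (H : Set G) * (Rm : Set G) := by
    rw [Subgroup.coe_inf, ← hHRs, ← hded]
  exact mul_comm_of_eq_coe this

lemma sylow_le_of_sup [Finite G] {H A : Subgroup G} (hH : IsSPermutable H)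
    {q : ℕ} (hq : q.Prime) (Q : Sylow q G) (hAQ : A = H ⊔ (Q : Subgroup G))
    {p : ℕ} (pp : p.Prime) (hpq : p ≠ q) (R : Sylow p A) :
    (R : Subgroup A).map A.subtype ≤ H := by
  haveI := Fact.mk pp
  haveI := Fact.mk hq
  have hHA : H ≤ A := hAQ ▸ le_sup_left
  set Rm : Subgroup G := (R : Subgroup A).map A.subtype with hRmdef
  have hRmA : Rm ≤ A := Subgroup.map_subtype_le _
  have hpRm : IsPGroup p Rm := R.2.map _
  obtain ⟨s, hsQ, hcardA'⟩ := card_sup_of_mul_comm (hH q hq Q)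
  have hcardA : Nat.card A = Nat.card H * s := by rw [hAQ]; exact hcardA'
  have hcommR := isSPermutable_restrict hH hHA pp R
  obtain ⟨t, htR, hcardB⟩ := card_sup_of_mul_comm hcommR
  have hBA : H ⊔ Rm ≤ A := sup_le hHA hRmA
  have hdvd : Nat.card (H ⊔ Rm : Subgroup G) ∣ Nat.card A :=
    Subgroup.card_dvd_of_le hBA
  rw [hcardB, hcardA] at hdvd
  have hpos : 0 < Nat.card H := Nat.card_pos
  have hts : t ∣ s := (Nat.mul_dvd_mul_iff_left hpos).mp hdvd
  obtain ⟨n, hn⟩ := (Q.2).exists_card_eq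
  obtain ⟨m, hm⟩ := hpRm.exists_card_eq
  have htq : t ∣ q ^ n := hn ▸ hts.trans hsQ
  have htp : t ∣ p ^ m := hm ▸ htR
  have hco : Nat.Coprime (p ^ m) (q ^ n) :=
    Nat.Coprime.pow m n ((Nat.coprime_primes pp hq).mpr hpq)
  have ht1 : t = 1 := Nat.eq_one_of_dvd_coprimes hco htp htq
  have hcard : Nat.card (H ⊔ Rm : Subgroup G) = Nat.card H := by
    rw [hcardB, ht1, mul_one]
  -- conclude H = H ⊔ Rm
  have hsub : H.subgroupOf (H ⊔ Rm) = ⊤ := by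
    apply Subgroup.eq_top_of_card_eq
    rw [hcard]
    exact Nat.card_congr (Subgroup.subgroupOfEquivOfLe (le_sup_left : H ≤ H ⊔ Rm)).toEquiv
  intro x hx
  have hx' : x ∈ Rm := hx
  have hxB : x ∈ H ⊔ Rm := (le_sup_right : Rm ≤ H ⊔ Rm) hx'
  have : (⟨x, hxB⟩ : (H ⊔ Rm : Subgroup G)) ∈ H.subgroupOf (H ⊔ Rm) := by
    rw [hsub]; trivial
  exact this

end Aux

/-- The intersection of two s-permutable subgroups of a finite group is s-permutable. -/
theorem isSPermutable_inf {G : Type*} [Group G] [Finite G] (H K : Subgroup G)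
    (hH : IsSPermutable H) (hK : IsSPermutable K) : IsSPermutable (H ⊓ K) := by
  intro q hq Q
  haveI := Fact.mk hq
  set A : Subgroup G := H ⊔ (Q : Subgroup G) with hA
  set C : Subgroup G := K ⊔ (Q : Subgroup G) with hC
  set M : Subgroup G := A ⊓ C with hM
  have hQM : (Q : Subgroup G) ≤ M := le_inf le_sup_right le_sup_right
  have hDM : H ⊓ K ≤ M := le_inf (inf_le_left.trans le_sup_left) (inf_le_right.trans le_sup_left)
  -- every Sylow p-subgroup of M for p ≠ q is contained in H ⊓ K
  have claim1 : ∀ (p : ℕ), p.Prime → p ≠ q → ∀ P : Sylow p M,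
      (P : Subgroup M).map M.subtype ≤ H ⊓ K := by
    intro p pp hpq P
    haveI := Fact.mk pp
    have hPm : IsPGroup p ((P : Subgroup M).map M.subtype) := P.2.map _
    have hPmM : (P : Subgroup M).map M.subtype ≤ M := Subgroup.map_subtype_le _
    have aux : ∀ (L B : Subgroup G), IsSPermutable L → B = L ⊔ (Q : Subgroup G) →
        (P : Subgroup M).map M.subtype ≤ B → (P : Subgroup M).map M.subtype ≤ L := by
      intro L B hL hBL hPB
      have hpg : IsPGroup p (((P : Subgroup M).map M.subtype).subgroupOf B) :=
        hPm.of_equiv (Subgroup.subgroupOfEquivOfLe hPB).symm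
      obtain ⟨RB, hRB⟩ := hpg.exists_le_sylow
      have h1 : (RB : Subgroup B).map B.subtype ≤ L := sylow_le_of_sup hL hq Q hBL pp hpq RB
      refine le_trans ?_ h1
      have h2 : ((((P : Subgroup M).map M.subtype).subgroupOf B).map B.subtype) ≤
          (RB : Subgroup B).map B.subtype := Subgroup.map_mono hRB
      rwa [Subgroup.subgroupOf_map_subtype, inf_of_le_left hPB] at h2
    exact le_inf (aux H A hH hA (hPmM.trans inf_le_left))
      (aux K C hK hC (hPmM.trans inf_le_right))
  -- the normal closure of all such Sylow subgroups
  set S : Set M := ⋃ (p : ℕ) (_ : p.Prime ∧ p ≠ q) (P : Sylow p M), (P : Set M) with hS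
  set N : Subgroup M := Subgroup.normalClosure S with hN
  haveI hNnormal : N.Normal := Subgroup.normalClosure_normal
  have hSD : ∀ x : M, x ∈ Group.conjugatesOfSet S → (x : G) ∈ H ⊓ K := by
    intro x hx
    rw [Group.mem_conjugatesOfSet_iff] at hx
    obtain ⟨a, haS, hconj⟩ := hx
    rw [isConj_iff] at hconj
    obtain ⟨c, rfl⟩ := hconj
    simp only [hS, Set.mem_iUnion] at haS
    obtain ⟨p, ⟨pp, hpq⟩, P, ha⟩ := haS
    haveI := Fact.mk pp
    have hmem : c * a * c⁻¹ ∈ ((c • P : Sylow p M) : Subgroup M) := by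
      rw [Sylow.coe_subgroup_smul, Subgroup.mem_pointwise_smul_iff_inv_smul_mem]
      have heq : (MulAut.conj c)⁻¹ • (c * a * c⁻¹) = a := by
        simp only [MulAut.smul_def, MulAut.conj_inv_apply]
        group
      rwa [heq]
    exact claim1 p pp hpq (c • P) (Subgroup.mem_map.mpr ⟨c * a * c⁻¹, hmem, rfl⟩)
  have hND : N ≤ (H ⊓ K).subgroupOf M := by
    rw [hN, Subgroup.normalClosure]
    apply (Subgroup.closure_le _).mpr
    intro x hx
    exact hSD x hx
  -- M / N is a q-group
  have hdiv : ∀ p : ℕ, p.Prime → p ∣ Nat.card (M ⧸ N) → p = q := by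
    intro p pp hpm
    by_contra hne
    haveI := Fact.mk pp
    obtain ⟨g, hg⟩ := exists_prime_orderOf_dvd_card' (G := M ⧸ N) p hpm
    have hzp : IsPGroup p (Subgroup.zpowers g) :=
      IsPGroup.of_card (by rw [Nat.card_zpowers, hg, pow_one])
    obtain ⟨Pq, hPq⟩ := hzp.exists_le_sylow
    obtain ⟨P0, hP0⟩ := Sylow.mapSurjective_surjective (QuotientGroup.mk'_surjective N) p Pq
    have hP0N : (P0 : Subgroup M) ≤ N := by
      intro y hy
      apply Subgroup.subset_normalClosure
      simp only [hS, Set.mem_iUnion]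
      exact ⟨p, ⟨pp, hne⟩, P0, hy⟩
    have hbot : (P0 : Subgroup M).map (QuotientGroup.mk' N) = ⊥ := by
      rw [Subgroup.map_eq_bot_iff, QuotientGroup.ker_mk']
      exact hP0N
    have hPqbot : (Pq : Subgroup (M ⧸ N)) = ⊥ := by
      rw [← hP0, Sylow.coe_mapSurjective, hbot]
    have : g = 1 := by
      have := hPq (Subgroup.mem_zpowers g)
      rwa [hPqbot, Subgroup.mem_bot] at this
    rw [this, orderOf_one] at hg
    exact pp.one_lt.ne' hg.symm
  have hm0 : Nat.card (M ⧸ N) ≠ 0 := Nat.card_pos.ne'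
  have hqpow : ∃ k, Nat.card (M ⧸ N) = q ^ k :=
    ⟨_, Nat.eq_prime_pow_of_unique_prime_dvd hm0 (fun {r} hr hdr => hdiv r hr hdr)⟩
  obtain ⟨k, hk⟩ := hqpow
  -- the image of Q in M/N is everything
  set QM : Sylow q M := Q.subtype hQM with hQM'
  set T : Subgroup M := (QM : Subgroup M) ⊔ N with hT
  have hTtop : T = ⊤ := by
    rw [← Subgroup.index_eq_one]
    have h1 : T.index ∣ (QM : Subgroup M).index := Subgroup.index_dvd_of_le le_sup_left
    have h2 : T.index ∣ q ^ k := by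
      rw [← hk]
      have h3 : T.index ∣ N.index := Subgroup.index_dvd_of_le le_sup_right
      rwa [Subgroup.index_eq_card] at h3
    have hqnot : ¬ q ∣ (QM : Subgroup M).index := QM.not_dvd_index
    obtain ⟨i, hik, hi⟩ := (Nat.dvd_prime_pow hq).mp h2
    cases i with
    | zero => simpa using hi
    | succ i =>
      exfalso
      apply hqnot
      apply dvd_trans _ h1
      rw [hi, pow_succ]
      exact dvd_mul_left _ _
  -- conclude
  have hcM1 : ((⊤ : Subgroup M) : Set M) = ((QM : Subgroup M) : Set M) * (N : Set M) := by
    rw [← hTtop, hT]; exact Subgroup.mul_normal _ _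
  have hcM2 : ((⊤ : Subgroup M) : Set M) = (N : Set M) * ((QM : Subgroup M) : Set M) := by
    rw [← hTtop, hT, sup_comm]; exact Subgroup.normal_mul _ _
  have hsub1 : ((H ⊓ K : Subgroup G) : Set G) * ((Q : Subgroup G) : Set G) ⊆ (M : Set G) := by
    rintro _ ⟨d, hd, u, hu, rfl⟩
    exact M.mul_mem (hDM hd) (hQM hu)
  have hsub2 : ((Q : Subgroup G) : Set G) * ((H ⊓ K : Subgroup G) : Set G) ⊆ (M : Set G) := by
    rintro _ ⟨u, hu, d, hd, rfl⟩
    exact M.mul_mem (hQM hu) (hDM hd)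
  have hQMcoe : ∀ u : M, u ∈ (QM : Subgroup M) → (u : G) ∈ (Q : Subgroup G) := by
    intro u hu
    rw [hQM'] at hu
    exact hu
  have hsup1 : (M : Set G) ⊆ ((H ⊓ K : Subgroup G) : Set G) * ((Q : Subgroup G) : Set G) := by
    intro x hx
    have hxm : (⟨x, hx⟩ : M) ∈ ((⊤ : Subgroup M) : Set M) := trivial
    rw [hcM2] at hxm
    obtain ⟨n, hn, u, hu, heq⟩ := hxm
    refine ⟨(n : G), ?_, (u : G), hQMcoe u hu, ?_⟩
    · have := hND hn
      exact this
    · have heq' : n * u = (⟨x, hx⟩ : M) := heq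
      have : ((n * u : M) : G) = x := by rw [heq']
      simpa using this
  have hsup2 : (M : Set G) ⊆ ((Q : Subgroup G) : Set G) * ((H ⊓ K : Subgroup G) : Set G) := by
    intro x hx
    have hxm : (⟨x, hx⟩ : M) ∈ ((⊤ : Subgroup M) : Set M) := trivial
    rw [hcM1] at hxm
    obtain ⟨u, hu, n, hn, heq⟩ := hxm
    refine ⟨(u : G), hQMcoe u hu, (n : G), hND hn, ?_⟩
    have heq' : u * n = (⟨x, hx⟩ : M) := heq
    have : ((u * n : M) : G) = x := by rw [heq']
    simpa using this
  have e1 : ((H ⊓ K : Subgroup G) : Set G) * ((Q : Subgroup G) : Set G) = (M : Set G) :=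
    le_antisymm hsub1 hsup1
  have e2 : ((Q : Subgroup G) : Set G) * ((H ⊓ K : Subgroup G) : Set G) = (M : Set G) :=
    le_antisymm hsub2 hsup2
  rw [e1, e2]
end

section
/- Let G be a finite group, N a normal subgroup of G, and H a p-subgroup of G for some prime p dividing |G|. If H is s-semipermutable in G, then HN/N is s-semipermutable in G/N. -/
open Pointwise

/-- A subgroup `H` of `G` is s-semipermutable in `G` if `H` permutes with every Sylow
`q`-subgroup of `G` for all primes `q` coprime to `|H|`. -/
def IsSSemipermutable {G : Type*} [Group G] (H : Subgroup G) : Prop :=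
  ∀ q : ℕ, q.Prime → Nat.Coprime q (Nat.card H) → ∀ Q : Sylow q G,
    (H : Set G) * ((Q : Subgroup G) : Set G) = ((Q : Subgroup G) : Set G) * (H : Set G)

/-- If `H` is an s-semipermutable `p`-subgroup of `G` and `N ⊴ G`, then `HN/N` is
s-semipermutable in `G/N`. -/
theorem isSSemipermutable_map_quotient {G : Type*} [Group G] [Finite G]
    (N : Subgroup G) [N.Normal] {p : ℕ} (hp : p.Prime) (hpG : p ∣ Nat.card G)
    (H : Subgroup G) (hH : IsPGroup p H) (h : IsSSemipermutable H) :
    IsSSemipermutable (H.map (QuotientGroup.mk' N)) := by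
  intro q hq hcop Q
  haveI := Fact.mk hq
  by_cases hbot : H.map (QuotientGroup.mk' N) = ⊥
  · simp [hbot]
  · -- the image is a nontrivial p-group, so p divides its card, hence q ≠ p
    haveI := Fact.mk hp
    have hmap : IsPGroup p (H.map (QuotientGroup.mk' N)) := hH.map _
    have hdvd : p ∣ Nat.card (H.map (QuotientGroup.mk' N)) := by
      rcases hmap.card_eq_or_dvd with h1 | h1
      · exact absurd (Subgroup.card_eq_one.mp h1) hbot
      · exact h1
    have hqp : q ≠ p := by
      intro e
      subst e
      exact hq.one_lt.ne' (hcop.eq_one_of_dvd hdvd)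
    have hcopH : Nat.Coprime q (Nat.card H) := by
      obtain ⟨k, hk⟩ := hH.exists_card_eq
      rw [hk]
      exact Nat.Coprime.pow_right _ ((Nat.coprime_primes hq hp).mpr hqp)
    obtain ⟨P, hP⟩ := Sylow.mapSurjective_surjective
      (QuotientGroup.mk'_surjective N) q Q
    have hPQ : (Q : Subgroup (G ⧸ N)) = P.map (QuotientGroup.mk' N) := by
      rw [← hP, Sylow.coe_mapSurjective]
    have key := h q hq hcopH P
    have himg := congrArg (fun s : Set G => (QuotientGroup.mk' N) '' s) key
    simpa only [Set.image_mul, Subgroup.coe_map, hPQ] using himg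
end

section
/- Let G be a finite group and H a subgroup with H ≤ O_p(G) for some prime p, where O_p(G) is the largest normal p-subgroup of G. If H is s-semipermutable in G, then H is s-permutable in G. -/
open Pointwise

/-- `O_p(G)`: the largest normal `p`-subgroup of `G`, realized as the supremum of all
normal `p`-subgroups of `G`. -/
def pCore (p : ℕ) (G : Type*) [Group G] : Subgroup G :=
  sSup {N : Subgroup G | N.Normal ∧ IsPGroup p N}

/-- `O_p(G)` is contained in every Sylow `p`-subgroup of `G`. -/
lemma pCore_le_sylow {G : Type*} [Group G] [Finite G] {p : ℕ} (hp : p.Prime)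
    (Q : Sylow p G) : pCore p G ≤ Q := by
  haveI := Fact.mk hp
  apply sSup_le
  rintro N ⟨hN, hNp⟩
  obtain ⟨P, hP⟩ := hNp.exists_le_sylow
  obtain ⟨g, hg⟩ := MulAction.exists_smul_eq G P Q
  calc N = MulAut.conj g • N := (@Subgroup.Normal.conj_smul_eq_self _ _ g N hN).symm
    _ ≤ MulAut.conj g • (P : Subgroup G) :=
        Subgroup.pointwise_smul_le_pointwise_smul_iff.mpr hP
    _ = ((g • P : Sylow p G) : Subgroup G) := rfl
    _ = Q := by rw [hg]

/-- If `H ≤ O_p(G)` and `H` is s-semipermutable in `G`, then `H` is s-permutable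
in `G`. -/
theorem isSPermutable_of_isSSemipermutable_le_pCore {G : Type*} [Group G] [Finite G]
    {p : ℕ} (hp : p.Prime) (H : Subgroup G) (hle : H ≤ pCore p G)
    (h : IsSSemipermutable H) : IsSPermutable H := by
  haveI := Fact.mk hp
  intro q hq Q
  rcases eq_or_ne q p with rfl | hne
  · -- `H` is contained in every Sylow `p`-subgroup `Q`, so `HQ = Q = QH`.
    have hHQ : H ≤ (Q : Subgroup G) := hle.trans (pCore_le_sylow hp Q)
    have h1 : (H : Set G) * ((Q : Subgroup G) : Set G) = ((Q : Subgroup G) : Set G) := by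
      apply subset_antisymm
      · rintro x ⟨a, ha, b, hb, rfl⟩
        exact mul_mem (hHQ ha) hb
      · intro x hx
        exact ⟨1, H.one_mem, x, hx, one_mul x⟩
    have h2 : ((Q : Subgroup G) : Set G) * (H : Set G) = ((Q : Subgroup G) : Set G) := by
      apply subset_antisymm
      · rintro x ⟨a, ha, b, hb, rfl⟩
        exact mul_mem ha (hHQ hb)
      · intro x hx
        exact ⟨x, hx, 1, H.one_mem, mul_one x⟩
    rw [h1, h2]
  · -- `H` is a `p`-group, so `q` is coprime to `|H|`.
    obtain ⟨P : Sylow p G⟩ := (inferInstance : Nonempty (Sylow p G))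
    have hHp : IsPGroup p H := P.2.to_le (hle.trans (pCore_le_sylow hp P))
    obtain ⟨n, hn⟩ := hHp.exists_card_eq
    exact h q hq (by rw [hn]; exact ((Nat.coprime_primes hq hp).mpr hne).pow_right n) Q
end

section
/- Let G be a finite group, H a p-subgroup of G for some prime p dividing |G|, and N a normal subgroup of G. If H is s-semipermutable in G, then H ∩ N is s-semipermutable in G. -/
open Pointwise

/-- If `H` is an s-semipermutable `p`-subgroup of `G` and `N ⊴ G`, then `H ∩ N` is
s-semipermutable in `G`. -/
theorem isSSemipermutable_inf_normal {G : Type*} [Group G] [Finite G] {p : ℕ}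
    (hp : p.Prime) (hpG : p ∣ Nat.card G) (H : Subgroup G) (hH : IsPGroup p H)
    (N : Subgroup G) [N.Normal] (h : IsSSemipermutable H) :
    IsSSemipermutable (H ⊓ N) := by
  intro q hq hcop Q
  haveI : Fact p.Prime := ⟨hp⟩
  by_cases hqp : q = p
  · -- Then `H ⊓ N` must be trivial.
    subst hqp
    have hHN := hH.to_inf_left (K := N)
    obtain ⟨n, hn⟩ := IsPGroup.iff_card.mp hHN
    have hbot : H ⊓ N = ⊥ := by
      have hn0 : n = 0 := by
        by_contra h0
        have hdvd : q ∣ Nat.card (H ⊓ N : Subgroup G) := by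
          rw [hn]; exact dvd_pow_self q h0
        have := Nat.eq_one_of_dvd_coprimes hcop dvd_rfl hdvd
        exact hq.one_lt.ne' this
      have h1 : Nat.card (H ⊓ N : Subgroup G) = 1 := by rw [hn, hn0, pow_zero]
      exact Subgroup.eq_bot_of_card_eq _ h1
    rw [hbot]
    simp
  · -- `q ≠ p`, so `q` is coprime to `|H|` and we can use s-semipermutability of `H`.
    have hcopH : Nat.Coprime q (Nat.card H) := by
      obtain ⟨n, hn⟩ := IsPGroup.iff_card.mp hH
      rw [hn]
      exact Nat.Coprime.pow_right n ((Nat.coprime_primes hq hp).mpr hqp)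
    have hHQ : (H : Set G) * ((Q : Subgroup G) : Set G)
        = ((Q : Subgroup G) : Set G) * (H : Set G) := h q hq hcopH Q
    set M : Subgroup G := N ⊔ (Q : Subgroup G) with hM
    have hNM : N ≤ M := le_sup_left
    have hQM : (Q : Subgroup G) ≤ M := le_sup_right
    -- key: any element of `H` lying in `M = N ⊔ Q` lies in `N`.
    have key : ∀ x, x ∈ H → x ∈ M → x ∈ N := by
      intro x hxH hxM
      set f := QuotientGroup.mk' N with hf
      have hmap : M.map f = (Q : Subgroup G).map f := by
        rw [hM, Subgroup.map_sup, (Subgroup.map_eq_bot_iff N).mpr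
          (le_of_eq (QuotientGroup.ker_mk' N).symm), bot_sup_eq]
      have hfx : f x ∈ (Q : Subgroup G).map f := by
        rw [← hmap]; exact Subgroup.mem_map_of_mem f hxM
      -- `f x` has `p`-power order
      obtain ⟨k, hk⟩ := hH ⟨x, hxH⟩
      have hxp : x ^ p ^ k = 1 := by
       have := congrArg (Subtype.val) hk
       simpa using this
      have hfxp : (f x) ^ p ^ k = 1 := by
        rw [← map_pow, hxp, map_one]
      -- `f x` has `q`-power order
      have hQq : IsPGroup q ((Q : Subgroup G).map f) := Q.2.map f
      obtain ⟨m, hm⟩ := hQq ⟨f x, hfx⟩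
      have hfxq : (f x) ^ q ^ m = 1 := by
        have := congrArg (Subtype.val) hm
        simpa using this
      have h1 : f x = 1 := by
        have hd1 : orderOf (f x) ∣ p ^ k := orderOf_dvd_of_pow_eq_one hfxp
        have hd2 : orderOf (f x) ∣ q ^ m := orderOf_dvd_of_pow_eq_one hfxq
        have hcpq : Nat.Coprime (p ^ k) (q ^ m) :=
          Nat.Coprime.pow k m ((Nat.coprime_primes hp hq).mpr (Ne.symm hqp))
        have : orderOf (f x) = 1 := Nat.eq_one_of_dvd_coprimes hcpq hd1 hd2
        exact orderOf_eq_one_iff.mp this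
      have : x ∈ f.ker := h1
      rwa [hf, QuotientGroup.ker_mk'] at this
    ext x
    constructor
    · rintro ⟨a, ha, b, hb, rfl⟩
      obtain ⟨haH, haN⟩ := Subgroup.mem_inf.mp ha
      have hx : a * b ∈ ((Q : Subgroup G) : Set G) * (H : Set G) := by
        rw [← hHQ]; exact Set.mul_mem_mul haH hb
      obtain ⟨c, hc, d, hd, hcd⟩ := hx
      have hcd' : c * d = a * b := hcd
      have hdM : d ∈ M := by
        have hd' : d = c⁻¹ * (a * b) := by
          rw [← hcd']; group
        rw [hd']
        exact M.mul_mem (M.inv_mem (hQM hc)) (M.mul_mem (hNM haN) (hQM hb))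
      exact ⟨c, hc, d, Subgroup.mem_inf.mpr ⟨hd, key d hd hdM⟩, hcd⟩
    · rintro ⟨b, hb, a, ha, rfl⟩
      obtain ⟨haH, haN⟩ := Subgroup.mem_inf.mp ha
      have hx : b * a ∈ (H : Set G) * ((Q : Subgroup G) : Set G) := by
        rw [hHQ]; exact Set.mul_mem_mul hb haH
      obtain ⟨d, hd, c, hc, hcd⟩ := hx
      have hcd' : d * c = b * a := hcd
      have hdM : d ∈ M := by
        have hd' : d = (b * a) * c⁻¹ := by
          rw [← hcd']; group
        rw [hd']
        exact M.mul_mem (M.mul_mem (hQM hb) (hNM haN)) (M.inv_mem (hQM hc))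
      exact ⟨d, Subgroup.mem_inf.mpr ⟨hd, key d hd hdM⟩, c, hc, hcd⟩
end

section
/- Let G be a finite group, N an abelian normal subgroup of G, and M a subgroup with N ≤ M ≤ G such that gcd(|N|, [G:M]) = 1. If N has a complement in M, then N has a complement in G. -/
namespace GaschutzAux

open scoped IsMulCommutative

variable {G : Type*} [Group G]

open scoped Classical in
/-- The projection `M = N * L → N`. -/
noncomputable def pr (N L : Subgroup G) (g : G) : G :=
  if h : ∃ n ∈ N, ∃ l ∈ L, n * l = g then h.choose else 1

variable {N M L : Subgroup G}

theorem pr_eq (hbot : N ⊓ L = ⊥) {n l : G} (hn : n ∈ N) (hl : l ∈ L) :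
    pr N L (n * l) = n := by
  classical
  have hex : ∃ n' ∈ N, ∃ l' ∈ L, n' * l' = n * l := ⟨n, hn, l, hl, rfl⟩
  rw [pr, dif_pos hex]
  obtain ⟨hn', l', hl', hmul⟩ := hex.choose_spec
  set n' := hex.choose with hn'def
  have h2 : n = n' * (l' * l⁻¹) := by
    rw [← mul_assoc, hmul, mul_assoc, mul_inv_cancel, mul_one]
  have key : n'⁻¹ * n ∈ N ⊓ L := by
    refine ⟨N.mul_mem (N.inv_mem hn') hn, ?_⟩
    rw [h2, inv_mul_cancel_left]
    exact L.mul_mem hl' (L.inv_mem hl)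
  rw [hbot, Subgroup.mem_bot] at key
  have := congrArg (n' * ·) key
  simpa [mul_assoc] using this.symm

theorem exists_decomp [N.Normal] (hsup : N ⊔ L = M) {g : G} (hg : g ∈ M) :
    ∃ n ∈ N, ∃ l ∈ L, n * l = g := by
  rw [← hsup, ← SetLike.mem_coe, Subgroup.normal_mul] at hg
  obtain ⟨n, hn, l, hl, h⟩ := hg
  exact ⟨n, hn, l, hl, h⟩

theorem pr_mem [N.Normal] (hbot : N ⊓ L = ⊥) (hsup : N ⊔ L = M) {g : G} (hg : g ∈ M) :
    pr N L g ∈ N := by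
  obtain ⟨n, hn, l, hl, rfl⟩ := exists_decomp hsup hg
  rw [pr_eq hbot hn hl]; exact hn

theorem pr_of_mem (hbot : N ⊓ L = ⊥) {n : G} (hn : n ∈ N) : pr N L n = n := by
  simpa using pr_eq hbot hn L.one_mem

theorem pr_mul [N.Normal] (hbot : N ⊓ L = ⊥) (hsup : N ⊔ L = M)
    (hab : ∀ x ∈ N, ∀ y ∈ N, x * y = y * x)
    {m₁ m₂ : G} (h₁ : m₁ ∈ M) (h₂ : m₂ ∈ M) :
    pr N L (m₁ * m₂) = pr N L m₁ * (m₁ * pr N L m₂ * m₁⁻¹) := by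
  obtain ⟨n₁, hn₁, l₁, hl₁, rfl⟩ := exists_decomp hsup h₁
  obtain ⟨n₂, hn₂, l₂, hl₂, rfl⟩ := exists_decomp hsup h₂
  have hnn : l₁ * n₂ * l₁⁻¹ ∈ N := Subgroup.Normal.conj_mem ‹N.Normal› n₂ hn₂ l₁
  have key : n₁ * l₁ * (n₂ * l₂) = n₁ * (l₁ * n₂ * l₁⁻¹) * (l₁ * l₂) := by group
  rw [key, pr_eq hbot (N.mul_mem hn₁ hnn) (L.mul_mem hl₁ hl₂),
    pr_eq hbot hn₁ hl₁, pr_eq hbot hn₂ hl₂]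
  have hc : n₁ * l₁ * n₂ * (n₁ * l₁)⁻¹ = n₁ * (l₁ * n₂ * l₁⁻¹) * n₁⁻¹ := by group
  rw [hc, hab _ hn₁ _ hnn, mul_inv_cancel_right]
  exact hab _ hnn _ hn₁

variable (N M L)

/-- the element of `M` comparing reps of `q` and `g • (g⁻¹ • q)`. -/
noncomputable def aa (g : G) (q : G ⧸ M) : G := q.out⁻¹ * g * (g⁻¹ • q).out

theorem aa_mem (g : G) (q : G ⧸ M) : aa M g q ∈ M := by
  have h1 : (QuotientGroup.mk (g * (g⁻¹ • q).out) : G ⧸ M) = QuotientGroup.mk q.out := by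
    rw [show g * (g⁻¹ • q).out = g • (g⁻¹ • q).out from rfl,
      MulAction.Quotient.mk_smul_out, smul_inv_smul, QuotientGroup.out_eq']
  have h2 := QuotientGroup.eq.mp h1.symm
  simpa [aa, mul_assoc] using h2

theorem aa_mul (g h : G) (q : G ⧸ M) :
    aa M (g * h) q = aa M g q * aa M h (g⁻¹ • q) := by
  simp only [aa]
  have h1 : (g * h)⁻¹ • q = h⁻¹ • g⁻¹ • q := by rw [mul_inv_rev, mul_smul]
  rw [h1]
  group

variable [N.Normal] [IsMulCommutative N] [Fintype (G ⧸ M)]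

/-- One factor of the averaged cocycle. -/
noncomputable def ff (hbot : N ⊓ L = ⊥) (hsup : N ⊔ L = M) (g : G) (q : G ⧸ M) : N :=
  ⟨q.out * pr N L (aa M g q) * q.out⁻¹,
    Subgroup.Normal.conj_mem ‹N.Normal› _ (pr_mem hbot hsup (aa_mem M g q)) q.out⟩

/-- The averaged cocycle `d : G → N`. -/
noncomputable def dd (hbot : N ⊓ L = ⊥) (hsup : N ⊔ L = M) (g : G) : N :=
  ∏ q : G ⧸ M, ff N M L hbot hsup g q

/-- conjugation as a hom `N →* N`. -/
def conjN (g : G) : N →* N where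
  toFun n := ⟨g * n * g⁻¹, Subgroup.Normal.conj_mem ‹N.Normal› _ n.2 g⟩
  map_one' := by ext; simp
  map_mul' a b := by ext; push_cast; group

omit [IsMulCommutative N] in
theorem conjN_conjN (g : G) (n : N) : conjN N g⁻¹ (conjN N g n) = n := by
  ext; simp only [conjN, MonoidHom.coe_mk, OneHom.coe_mk]; group

variable {N M L}

theorem ff_cocycle (hbot : N ⊓ L = ⊥) (hsup : N ⊔ L = M)
    (hab : ∀ x ∈ N, ∀ y ∈ N, x * y = y * x) (g h : G) (q : G ⧸ M) :
    ff N M L hbot hsup (g * h) q =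
      ff N M L hbot hsup g q * conjN N g (ff N M L hbot hsup h (g⁻¹ • q)) := by
  ext
  simp only [ff, conjN, MonoidHom.coe_mk, OneHom.coe_mk, Subgroup.coe_mul]
  rw [aa_mul, pr_mul hbot hsup hab (aa_mem M g q) (aa_mem M h (g⁻¹ • q))]
  have h1 : q.out * aa M g q = g * (g⁻¹ • q).out := by rw [aa]; group
  rw [show q.out * (pr N L (aa M g q) * (aa M g q * pr N L (aa M h (g⁻¹ • q)) * (aa M g q)⁻¹))
      * q.out⁻¹ = (q.out * pr N L (aa M g q) * q.out⁻¹) *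
      ((q.out * aa M g q) * pr N L (aa M h (g⁻¹ • q)) * (q.out * aa M g q)⁻¹) by group,
    h1]
  group

theorem dd_cocycle (hbot : N ⊓ L = ⊥) (hsup : N ⊔ L = M)
    (hab : ∀ x ∈ N, ∀ y ∈ N, x * y = y * x) (g h : G) :
    dd N M L hbot hsup (g * h) = dd N M L hbot hsup g * conjN N g (dd N M L hbot hsup h) := by
  rw [dd, Finset.prod_congr rfl (fun q _ => ff_cocycle hbot hsup hab g h q),
    Finset.prod_mul_distrib, ← map_prod]
  rw [dd, dd]
  congr 1
  congr 1
  exact Fintype.prod_equiv (MulAction.toPerm (g⁻¹ : G))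
    (fun q => ff N M L hbot hsup h (g⁻¹ • q)) (ff N M L hbot hsup h) (fun q => rfl)

theorem dd_of_mem (hbot : N ⊓ L = ⊥) (hsup : N ⊔ L = M) (hNM : N ≤ M) {n : G} (hn : n ∈ N) :
    dd N M L hbot hsup n = (⟨n, hn⟩ : N) ^ M.index := by
  have hfix : ∀ q : G ⧸ M, n⁻¹ • q = q := by
    intro q
    induction q using QuotientGroup.induction_on with
    | H x =>
      rw [MulAction.Quotient.smul_mk]
      refine QuotientGroup.eq.mpr ?_
      rw [show (n⁻¹ • x)⁻¹ * x = x⁻¹ * n * x by simp [smul_eq_mul]]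
      exact hNM (Subgroup.Normal.conj_mem' ‹N.Normal› _ hn x)
  have hfactor : ∀ q : G ⧸ M, ff N M L hbot hsup n q = ⟨n, hn⟩ := by
    intro q
    have haa : aa M n q = q.out⁻¹ * n * q.out := by rw [aa, hfix]
    have hmem : q.out⁻¹ * n * q.out ∈ N := Subgroup.Normal.conj_mem' ‹N.Normal› _ hn q.out
    ext
    simp only [ff]
    rw [haa, pr_of_mem hbot hmem]
    group
  rw [dd, Finset.prod_congr rfl (fun q _ => hfactor q), Finset.prod_const, Finset.card_univ,
    Subgroup.index_eq_card, Nat.card_eq_fintype_card]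

theorem dd_one (hbot : N ⊓ L = ⊥) (hsup : N ⊔ L = M) (hNM : N ≤ M) :
    dd N M L hbot hsup 1 = 1 := by
  rw [dd_of_mem hbot hsup hNM N.one_mem]; exact one_pow _

end GaschutzAux

open GaschutzAux IsMulCommutative in
/-- If `N` is an abelian normal subgroup of a finite group `G`, `N ≤ M ≤ G` with
`gcd(|N|, [G:M]) = 1`, and `N` is complemented in `M`, then `N` is complemented
in `G`. -/
theorem complement_of_complement_in_intermediate {G : Type*} [Group G] [Finite G]
    (N M : Subgroup G) [N.Normal] (hab : ∀ x ∈ N, ∀ y ∈ N, x * y = y * x)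
    (hNM : N ≤ M) (hcop : Nat.Coprime (Nat.card N) M.index)
    (h : ∃ L : Subgroup G, L ≤ M ∧ N ⊓ L = ⊥ ∧ N ⊔ L = M) :
    ∃ L : Subgroup G, N ⊓ L = ⊥ ∧ N ⊔ L = ⊤ := by
  classical
  obtain ⟨L, hLM, hbot, hsup⟩ := h
  haveI : IsMulCommutative N := ⟨⟨fun a b => Subtype.ext (hab a a.2 b b.2)⟩⟩
  letI : Fintype (G ⧸ M) := Fintype.ofFinite _
  set d : G → N := dd N M L hbot hsup with hd
  have hcoc : ∀ g h : G, d (g * h) = d g * conjN N g (d h) :=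
    fun g h => dd_cocycle hbot hsup hab g h
  have hconj_mem : ∀ n : G, n ∈ N → ∀ x : N, conjN N n x = x := by
    intro n hn x
    refine Subtype.ext ?_
    have h1 : n * (x : G) * n⁻¹ = (x : G) := by
      rw [hab n hn x x.2, mul_assoc, mul_inv_cancel, mul_one]
    simpa [GaschutzAux.conjN] using h1
  have hdinv : ∀ g : G, d g = 1 → d g⁻¹ = 1 := by
    intro g hg
    have h1 : d (g * g⁻¹) = 1 := by rw [mul_inv_cancel, hd]; exact dd_one hbot hsup hNM
    rw [hcoc, hg, one_mul] at h1
    have h2 := congrArg (conjN N g⁻¹) h1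
    rwa [conjN_conjN, map_one] at h2
  set K : Subgroup G :=
    { carrier := {g | d g = 1}
      one_mem' := by simp only [Set.mem_setOf_eq]; rw [hd]; exact dd_one hbot hsup hNM
      mul_mem' := by
        intro a b ha hb
        simp only [Set.mem_setOf_eq] at *
        rw [hcoc, ha, hb, map_one, one_mul]
      inv_mem' := by
        intro a ha
        simp only [Set.mem_setOf_eq] at *
        exact hdinv a ha } with hK
  have hmemK : ∀ g : G, g ∈ K ↔ d g = 1 := fun g => Iff.rfl
  refine ⟨K, ?_, ?_⟩
  · rw [eq_bot_iff]
    intro x hx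
    obtain ⟨hxN, hxK⟩ := hx
    have h1 : d x = (⟨x, hxN⟩ : N) ^ M.index := dd_of_mem hbot hsup hNM hxN
    rw [(hmemK x).mp hxK] at h1
    have h2 : powCoprime hcop (⟨x, hxN⟩ : N) = powCoprime hcop 1 := by
      rw [powCoprime_one, powCoprime_apply]
      exact h1.symm
    have h3 := (powCoprime hcop).injective h2
    simpa [Subgroup.mem_bot, Subtype.ext_iff] using h3
  · rw [eq_top_iff]
    intro g _
    set n : N := (powCoprime hcop).symm (d g) with hn
    have hdn : d (n : G) = d g := by
      rw [hd, dd_of_mem hbot hsup hNM n.2]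
      rw [show (⟨(n : G), n.2⟩ : N) = n from rfl, ← powCoprime_apply hcop,
        Equiv.apply_symm_apply, hd]
    have hinv : d ((n : G)⁻¹) = (d g)⁻¹ := by
      have h1 : d ((n : G) * (n : G)⁻¹) = 1 := by
        rw [mul_inv_cancel, hd]; exact dd_one hbot hsup hNM
      rw [hcoc, hdn, hconj_mem _ n.2] at h1
      exact (inv_eq_of_mul_eq_one_right h1).symm
    have hk : (n : G)⁻¹ * g ∈ K := by
      rw [hmemK, hcoc, hinv, hconj_mem _ (N.inv_mem n.2), inv_mul_cancel]
    have hg : g = (n : G) * ((n : G)⁻¹ * g) := by group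
    rw [hg]
    exact Subgroup.mul_mem _ (Subgroup.mem_sup_left n.2) (Subgroup.mem_sup_right hk)
end
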